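/- arXiv:1507.03862 — 6 statements merged into one kernel-verified Lean document; each statement's English description precedes it below -/
import Mathlib

section
/- Let 𝒳 be a full additive subcategory of an abelian category 𝒜. A cochain complex A• in 𝒜 is right 𝒳-acyclic (Hom(X, A•) is acyclic for every X ∈ 𝒳) if and only if the Hom-complex Hom(X•, A•) is acyclic for every bounded-above complex X• with components in 𝒳. -/
open CategoryTheory Limits

universe v u

variable {A : Type u} [Category.{v} A] [Abelian A]

/-- `Hom(X, -)` for `X ∈ 𝒳` carries the short complex `S` to a short exact
sequence of abelian groups. -/
def SESRightAcyclic (𝒳 : Set A) (S : ShortComplex A) : Prop :=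
  ∀ X ∈ 𝒳,
    (Function.Injective fun h : X ⟶ S.X₁ => h ≫ S.f) ∧
    (∀ h : X ⟶ S.X₂, h ≫ S.g = 0 → ∃ k : X ⟶ S.X₁, k ≫ S.f = h) ∧
    (Function.Surjective fun h : X ⟶ S.X₂ => h ≫ S.g)

/-- `Hom(-, Y)` for `Y ∈ 𝒴` carries the short complex `S` to a short exact
sequence of abelian groups. -/
def SESLeftAcyclic (𝒴 : Set A) (S : ShortComplex A) : Prop :=
  ∀ Y ∈ 𝒴,
    (Function.Injective fun h : S.X₃ ⟶ Y => S.g ≫ h) ∧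
    (∀ h : S.X₂ ⟶ Y, S.f ≫ h = 0 → ∃ k : S.X₃ ⟶ Y, S.g ≫ k = h) ∧
    (Function.Surjective fun h : S.X₂ ⟶ Y => S.f ≫ h)

/-- A `⁎`-acyclic short exact sequence: short exact, right `𝒳`-acyclic and
left `𝒴`-acyclic. -/
def SESStarAcyclic (𝒳 𝒴 : Set A) (S : ShortComplex A) : Prop :=
  S.ShortExact ∧ SESRightAcyclic 𝒳 S ∧ SESLeftAcyclic 𝒴 S

/-- A cochain complex `C` is right `𝒳`-acyclic if `Hom(X, C)` is acyclic for every `X ∈ 𝒳`. -/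
def RightAcyclicComplex (𝒳 : Set A) (C : CochainComplex A ℤ) : Prop :=
  ∀ X ∈ 𝒳, ∀ n : ℤ, ∀ h : X ⟶ C.X n, h ≫ C.d n (n + 1) = 0 →
    ∃ k : X ⟶ C.X (n - 1), k ≫ C.d (n - 1) n = h

/-- A cochain complex `C` is left `𝒴`-acyclic if `Hom(C, Y)` is acyclic for every `Y ∈ 𝒴`. -/
def LeftAcyclicComplex (𝒴 : Set A) (C : CochainComplex A ℤ) : Prop :=
  ∀ Y ∈ 𝒴, ∀ n : ℤ, ∀ h : C.X n ⟶ Y, C.d (n - 1) n ≫ h = 0 →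
    ∃ k : C.X (n + 1) ⟶ Y, C.d n (n + 1) ≫ k = h

/-- `f` is a right `𝒳`-quasi-isomorphism iff its mapping cone is right `𝒳`-acyclic. -/
noncomputable def RightQuasiIso (𝒳 : Set A) {C D : CochainComplex A ℤ} (f : C ⟶ D) : Prop :=
  RightAcyclicComplex 𝒳 (CochainComplex.mappingCone f)

/-- `f` is a `⁎`-quasi-isomorphism: its mapping cone is right `𝒳`-acyclic and left `𝒴`-acyclic. -/
noncomputable def StarQuasiIso (𝒳 𝒴 : Set A) {C D : CochainComplex A ℤ} (f : C ⟶ D) : Prop :=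
  RightAcyclicComplex 𝒳 (CochainComplex.mappingCone f) ∧
    LeftAcyclicComplex 𝒴 (CochainComplex.mappingCone f)

/-- A bounded-above complex with all components in `𝒳`. -/
def MinusComplexIn (𝒳 : Set A) (C : CochainComplex A ℤ) : Prop :=
  (∃ b : ℤ, ∀ i : ℤ, b < i → IsZero (C.X i)) ∧ ∀ i : ℤ, C.X i ∈ 𝒳

/-- A bounded complex. -/
def BoundedComplex (C : CochainComplex A ℤ) : Prop :=
  ∃ a b : ℤ, ∀ i : ℤ, i < a ∨ b < i → IsZero (C.X i)

/-- A proper `𝒳`-resolution `⋯ → P⁻¹ → P⁰ —ε→ M → 0`: the components of `P` in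
nonpositive degrees lie in `𝒳`, the positive components vanish, and the augmented
complex is right `𝒳`-acyclic. -/
def IsProperXResolution (𝒳 : Set A) (M : A) (P : CochainComplex A ℤ) (ε : P.X 0 ⟶ M) : Prop :=
  (∀ i : ℤ, 0 < i → IsZero (P.X i)) ∧ (∀ i : ℤ, i ≤ 0 → P.X i ∈ 𝒳) ∧
  P.d (-1) 0 ≫ ε = 0 ∧
  ∀ X ∈ 𝒳,
    (∀ h : X ⟶ M, ∃ k : X ⟶ P.X 0, k ≫ ε = h) ∧
    (∀ h : X ⟶ P.X 0, h ≫ ε = 0 → ∃ k : X ⟶ P.X (-1), k ≫ P.d (-1) 0 = h) ∧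
    (∀ n : ℤ, n < 0 → ∀ h : X ⟶ P.X n, h ≫ P.d n (n + 1) = 0 →
      ∃ k : X ⟶ P.X (n - 1), k ≫ P.d (n - 1) n = h)

/-- The augmented complex `⋯ → P⁻¹ → P⁰ —ε→ M → 0` is left `𝒴`-acyclic. -/
def AugResLeftAcyclic (𝒴 : Set A) (M : A) (P : CochainComplex A ℤ) (ε : P.X 0 ⟶ M) : Prop :=
  ∀ Y ∈ 𝒴,
    (∀ h : M ⟶ Y, ε ≫ h = 0 → h = 0) ∧
    (∀ h : P.X 0 ⟶ Y, P.d (-1) 0 ≫ h = 0 → ∃ k : M ⟶ Y, ε ≫ k = h) ∧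
    (∀ n : ℤ, n < 0 → ∀ h : P.X n ⟶ Y, P.d (n - 1) n ≫ h = 0 →
      ∃ k : P.X (n + 1) ⟶ Y, P.d n (n + 1) ≫ k = h)

/-- A proper `𝒴`-coresolution `0 → N —η→ Q⁰ → Q¹ → ⋯`. -/
def IsProperYCoresolution (𝒴 : Set A) (N : A) (Q : CochainComplex A ℤ) (η : N ⟶ Q.X 0) : Prop :=
  (∀ i : ℤ, i < 0 → IsZero (Q.X i)) ∧ (∀ i : ℤ, 0 ≤ i → Q.X i ∈ 𝒴) ∧
  η ≫ Q.d 0 1 = 0 ∧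
  ∀ Y ∈ 𝒴,
    (∀ h : N ⟶ Y, ∃ k : Q.X 0 ⟶ Y, η ≫ k = h) ∧
    (∀ h : Q.X 0 ⟶ Y, η ≫ h = 0 → ∃ k : Q.X 1 ⟶ Y, Q.d 0 1 ≫ k = h) ∧
    (∀ n : ℤ, 0 < n → ∀ h : Q.X n ⟶ Y, Q.d (n - 1) n ≫ h = 0 →
      ∃ k : Q.X (n + 1) ⟶ Y, Q.d n (n + 1) ≫ k = h)

/-- The augmented complex `0 → N —η→ Q⁰ → Q¹ → ⋯` is right `𝒳`-acyclic. -/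
def AugCoresRightAcyclic (𝒳 : Set A) (N : A) (Q : CochainComplex A ℤ) (η : N ⟶ Q.X 0) : Prop :=
  ∀ X ∈ 𝒳,
    (∀ h : X ⟶ N, h ≫ η = 0 → h = 0) ∧
    (∀ h : X ⟶ Q.X 0, h ≫ Q.d 0 1 = 0 → ∃ k : X ⟶ N, k ≫ η = h) ∧
    (∀ n : ℤ, 0 < n → ∀ h : X ⟶ Q.X n, h ≫ Q.d n (n + 1) = 0 →
      ∃ k : X ⟶ Q.X (n - 1), k ≫ Q.d (n - 1) n = h)

/-- `f : X ⟶ M` is a right `𝒳`-approximation of `M`. -/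
def IsRightApprox (𝒳 : Set A) {X M : A} (f : X ⟶ M) : Prop :=
  X ∈ 𝒳 ∧ ∀ X' ∈ 𝒳, ∀ g : X' ⟶ M, ∃ h : X' ⟶ X, h ≫ f = g

/-- `f : M ⟶ Y` is a left `𝒴`-approximation of `M`. -/
def IsLeftApprox (𝒴 : Set A) {M Y : A} (f : M ⟶ Y) : Prop :=
  Y ∈ 𝒴 ∧ ∀ Y' ∈ 𝒴, ∀ g : M ⟶ Y', ∃ h : Y ⟶ Y', f ≫ h = g

/-- A minimal (right minimal) right `𝒳`-approximation. -/
def IsMinimalRightApprox (𝒳 : Set A) {X M : A} (f : X ⟶ M) : Prop :=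
  IsRightApprox 𝒳 f ∧ ∀ s : X ⟶ X, s ≫ f = f → IsIso s

/-- A minimal (left minimal) left `𝒴`-approximation. -/
def IsMinimalLeftApprox (𝒴 : Set A) {M Y : A} (f : M ⟶ Y) : Prop :=
  IsLeftApprox 𝒴 f ∧ ∀ s : Y ⟶ Y, f ≫ s = f → IsIso s

/-- `(𝒳, 𝒴)` is a balanced pair: `𝒳` is contravariantly finite, `𝒴` is covariantly
finite, every object has a left `𝒴`-acyclic proper `𝒳`-resolution and a right
`𝒳`-acyclic proper `𝒴`-coresolution. -/
def IsBalancedPair (𝒳 𝒴 : Set A) : Prop :=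
  (∀ M : A, ∃ (X : A) (f : X ⟶ M), IsRightApprox 𝒳 f) ∧
  (∀ M : A, ∃ (Y : A) (f : M ⟶ Y), IsLeftApprox 𝒴 f) ∧
  (∀ M : A, ∃ (P : CochainComplex A ℤ) (ε : P.X 0 ⟶ M),
    IsProperXResolution 𝒳 M P ε ∧ AugResLeftAcyclic 𝒴 M P ε) ∧
  (∀ N : A, ∃ (Q : CochainComplex A ℤ) (η : N ⟶ Q.X 0),
    IsProperYCoresolution 𝒴 N Q η ∧ AugCoresRightAcyclic 𝒳 N Q η)

/-- Vanishing of the relative Ext group `Ext⁎ⁱ(M, N)`: the `i`-th cohomology of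
`Hom(P, N)` vanishes for every proper `𝒳`-resolution `P` of `M`. -/
def ExtStarVanish (𝒳 : Set A) (i : ℕ) (M N : A) : Prop :=
  ∀ (P : CochainComplex A ℤ) (ε : P.X 0 ⟶ M), IsProperXResolution 𝒳 M P ε →
    ∀ h : P.X (-(i : ℤ)) ⟶ N, P.d (-(i : ℤ) - 1) (-(i : ℤ)) ≫ h = 0 →
      ∃ k : P.X (-(i : ℤ) + 1) ⟶ N, P.d (-(i : ℤ)) (-(i : ℤ) + 1) ≫ k = h

/-- A cotorsion pair relative to the balanced pair `(𝒳, 𝒴)`, defined by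
orthogonality with respect to `Ext⁎¹`. -/
def IsRelCotorsionPair (𝒳 𝒞 𝒟 : Set A) : Prop :=
  (∀ C : A, C ∈ 𝒞 ↔ ∀ D ∈ 𝒟, ExtStarVanish 𝒳 1 C D) ∧
  (∀ D : A, D ∈ 𝒟 ↔ ∀ C ∈ 𝒞, ExtStarVanish 𝒳 1 C D)

/-- `𝒳` is admissible: every right `𝒳`-approximation is an epimorphism. -/
def XAdmissible (𝒳 : Set A) : Prop :=
  ∀ (X M : A) (f : X ⟶ M), IsRightApprox 𝒳 f → Epi f

/-- `𝒴` is coadmissible: every left `𝒴`-approximation is a monomorphism. -/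
def YCoadmissible (𝒴 : Set A) : Prop :=
  ∀ (M Y : A) (f : M ⟶ Y), IsLeftApprox 𝒴 f → Mono f

/-- `𝒳`-resolution dimension of `M` is at most `n`. -/
def XResdimLE (𝒳 : Set A) (n : ℕ) (M : A) : Prop :=
  ∃ (P : CochainComplex A ℤ) (ε : P.X 0 ⟶ M),
    IsProperXResolution 𝒳 M P ε ∧ ∀ i : ℤ, i < -(n : ℤ) → IsZero (P.X i)

/-- `𝒴`-coresolution dimension of `N` is at most `n`. -/
def YCoresdimLE (𝒴 : Set A) (n : ℕ) (N : A) : Prop :=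
  ∃ (Q : CochainComplex A ℤ) (η : N ⟶ Q.X 0),
    IsProperYCoresolution 𝒴 N Q η ∧ ∀ i : ℤ, (n : ℤ) < i → IsZero (Q.X i)


section Aux
open ZeroObject CochainComplex HomComplex

/-- Downward recursion on `ℤ`. -/
private noncomputable def drecAux {T : ℤ → Sort*} (b : ℤ) (base : ∀ p, T p)
    (step : ∀ p, T (p + 1) → T p) (p : ℤ) : T p :=
  if h : b < p then base p else step p (drecAux b base step (p + 1))
termination_by (b + 1 - p).toNat
decreasing_by simp_wf; omega

private lemma drecAux_of_lt {T : ℤ → Sort*} (b : ℤ) (base : ∀ p, T p)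
    (step : ∀ p, T (p + 1) → T p) {p : ℤ} (h : b < p) :
    drecAux b base step p = base p := by
  rw [drecAux, dif_pos h]

private lemma drecAux_of_le {T : ℤ → Sort*} (b : ℤ) (base : ∀ p, T p)
    (step : ∀ p, T (p + 1) → T p) {p : ℤ} (h : p ≤ b) :
    drecAux b base step p = step p (drecAux b base step (p + 1)) := by
  rw [drecAux, dif_neg (by omega)]

open scoped Classical in
private noncomputable def stepFun (X C : CochainComplex A ℤ) (n : ℤ)
    (z : ∀ p q, p + n = q → (X.X p ⟶ C.X q)) (p : ℤ)
    (u : ∀ q, (p + 1) + n - 1 = q → (X.X (p + 1) ⟶ C.X q)) :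
    ∀ q, p + n - 1 = q → (X.X p ⟶ C.X q) := fun q hq =>
  (if H : ∃ k : X.X p ⟶ C.X (p + n - 1),
      k ≫ C.d (p + n - 1) (p + n)
        = z p (p + n) rfl - n.negOnePow • X.d p (p + 1) ≫ u (p + n) (by omega)
    then H.choose else 0) ≫ eqToHom (congrArg C.X hq)

private lemma stepFun_spec (X C : CochainComplex A ℤ) (n : ℤ)
    (z : ∀ p q, p + n = q → (X.X p ⟶ C.X q)) (p : ℤ)
    (u : ∀ q, (p + 1) + n - 1 = q → (X.X (p + 1) ⟶ C.X q))
    (H : ∃ k : X.X p ⟶ C.X (p + n - 1),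
      k ≫ C.d (p + n - 1) (p + n)
        = z p (p + n) rfl - n.negOnePow • X.d p (p + 1) ≫ u (p + n) (by omega)) :
    stepFun X C n z p u (p + n - 1) rfl ≫ C.d (p + n - 1) (p + n)
      = z p (p + n) rfl - n.negOnePow • X.d p (p + 1) ≫ u (p + n) (by omega) := by
  unfold stepFun
  rw [dif_pos H]
  simpa using H.choose_spec

private lemma exists_contraction (X C : CochainComplex A ℤ) (n b : ℤ)
    (hb : ∀ i, b < i → IsZero (X.X i))
    (z : ∀ p q, p + n = q → (X.X p ⟶ C.X q))
    (hz : ∀ (p q₁ q₂ : ℤ) (h₁ : p + n = q₁) (h₂ : p + n + 1 = q₂),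
      z p q₁ h₁ ≫ C.d q₁ q₂ + (n + 1).negOnePow • X.d p (p + 1) ≫ z (p + 1) q₂ (by omega) = 0)
    (hlift : ∀ (p : ℤ) (h : X.X p ⟶ C.X (p + n)), h ≫ C.d (p + n) (p + n + 1) = 0 →
      ∃ k : X.X p ⟶ C.X (p + n - 1), k ≫ C.d (p + n - 1) (p + n) = h) :
    ∃ g : ∀ p q, p + n - 1 = q → (X.X p ⟶ C.X q),
      ∀ (p q₀ q₁ : ℤ) (h₀ : p + n - 1 = q₀) (h₁ : p + n = q₁),
        g p q₀ h₀ ≫ C.d q₀ q₁ + n.negOnePow • X.d p (p + 1) ≫ g (p + 1) q₁ (by omega)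
          = z p q₁ h₁ := by
  let t : ∀ p q, p + n - 1 = q → (X.X p ⟶ C.X q) :=
    drecAux (T := fun p => ∀ q, p + n - 1 = q → (X.X p ⟶ C.X q)) b
      (fun _ _ _ => 0) (stepFun X C n z)
  have P : ∀ p q₀ q₁ (h₀ : p + n - 1 = q₀) (h₁ : p + n = q₁),
      t p q₀ h₀ ≫ C.d q₀ q₁ + n.negOnePow • X.d p (p + 1) ≫ t (p + 1) q₁ (by omega)
        = z p q₁ h₁ := by
    have base : ∀ p, b < p → ∀ q₀ q₁ (h₀ : p + n - 1 = q₀) (h₁ : p + n = q₁),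
        t p q₀ h₀ ≫ C.d q₀ q₁ + n.negOnePow • X.d p (p + 1) ≫ t (p + 1) q₁ (by omega)
          = z p q₁ h₁ := by
      intro p hp q₀ q₁ h₀ h₁
      have e1 : t p = fun _ _ => 0 := drecAux_of_lt b _ _ hp
      have e2 : t (p + 1) = fun _ _ => 0 := drecAux_of_lt b _ _ (by omega)
      rw [e1, e2]
      simp only [zero_comp, comp_zero, smul_zero, add_zero]
      exact (hb p hp).eq_of_src 0 _
    have step : ∀ p, p ≤ b →
        (∀ q₀ q₁ (h₀ : (p + 1) + n - 1 = q₀) (h₁ : (p + 1) + n = q₁),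
          t (p + 1) q₀ h₀ ≫ C.d q₀ q₁
            + n.negOnePow • X.d (p + 1) (p + 1 + 1) ≫ t (p + 1 + 1) q₁ (by omega)
            = z (p + 1) q₁ h₁) →
        ∀ q₀ q₁ (h₀ : p + n - 1 = q₀) (h₁ : p + n = q₁),
          t p q₀ h₀ ≫ C.d q₀ q₁ + n.negOnePow • X.d p (p + 1) ≫ t (p + 1) q₁ (by omega)
            = z p q₁ h₁ := by
      intro p hp ih q₀ q₁ h₀ h₁
      subst h₀; subst h₁
      have ht : t p = stepFun X C n z p (t (p + 1)) := drecAux_of_le b _ _ hp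
      have hcond : ∃ k : X.X p ⟶ C.X (p + n - 1),
          k ≫ C.d (p + n - 1) (p + n)
            = z p (p + n) rfl - n.negOnePow • X.d p (p + 1) ≫ t (p + 1) (p + n) (by omega) := by
        apply hlift
        have e1' : t (p + 1) (p + n) (by omega) ≫ C.d (p + n) (p + n + 1)
            = z (p + 1) (p + n + 1) (by omega)
              - n.negOnePow • X.d (p + 1) (p + 1 + 1) ≫ t (p + 1 + 1) (p + n + 1) (by omega) :=
          eq_sub_of_add_eq (ih (p + n) (p + n + 1) (by omega) (by omega))
        have e2 := hz p (p + n) (p + n + 1) rfl rfl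
        rw [Int.negOnePow_succ, Units.neg_smul, ← sub_eq_add_neg] at e2
        simp only [Preadditive.sub_comp, Category.assoc, Linear.units_smul_comp]
        rw [e1']
        simp only [Preadditive.comp_sub, Linear.comp_units_smul, smul_sub, smul_smul,
          HomologicalComplex.d_comp_d_assoc, zero_comp, smul_zero, sub_zero]
        exact e2
      rw [ht, stepFun_spec X C n z p (t (p + 1)) hcond]
      exact sub_add_cancel _ _
    have main : ∀ (k : ℕ) (p : ℤ), b + 1 - (k : ℤ) ≤ p → ∀ q₀ q₁ (h₀ : p + n - 1 = q₀)
        (h₁ : p + n = q₁),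
        t p q₀ h₀ ≫ C.d q₀ q₁ + n.negOnePow • X.d p (p + 1) ≫ t (p + 1) q₁ (by omega)
          = z p q₁ h₁ := by
      intro k
      induction k with
      | zero => intro p hp; exact base p (by omega)
      | succ k ih =>
        intro p hp
        by_cases h : b + 1 - (k : ℤ) ≤ p
        · exact ih p h
        · exact step p (by omega) (ih (p + 1) (by omega))
    intro p
    exact main (b + 1 - p).toNat p (by omega)
  exact ⟨t, P⟩

private noncomputable def sglCx (Xo : A) : CochainComplex A ℤ where
  X i := if i = 0 then Xo else 0
  d _ _ := 0
  shape _ _ _ := rfl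
  d_comp_d' _ _ _ _ _ := by simp

private lemma sglCx_X_zero (Xo : A) : (sglCx Xo).X 0 = Xo := by
  show (if (0:ℤ) = 0 then Xo else 0) = Xo
  rw [if_pos rfl]

private lemma sglCx_isZero (Xo : A) {i : ℤ} (hi : i ≠ 0) : IsZero ((sglCx Xo).X i) := by
  show IsZero (if i = 0 then Xo else 0)
  rw [if_neg hi]
  exact isZero_zero A

private lemma sglCx_d (Xo : A) (i j : ℤ) : (sglCx Xo).d i j = 0 := rfl


theorem stmt2 (𝒳 : Set A) (h0 : ∀ Z : A, IsZero Z → Z ∈ 𝒳) (C : CochainComplex A ℤ) :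
    RightAcyclicComplex 𝒳 C ↔
      ∀ X : CochainComplex A ℤ, MinusComplexIn 𝒳 X →
        ∀ n : ℤ, (CochainComplex.HomComplex X C).ExactAt n := by
  constructor
  · intro hC Xc hXc n
    obtain ⟨⟨b, hb⟩, hmem⟩ := hXc
    rw [HomologicalComplex.exactAt_iff' _ (n - 1) n (n + 1) (by simp) (by simp),
      ShortComplex.ab_exact_iff]
    intro z hz0
    have hz0' : δ n (n + 1) z = 0 := hz0
    have hz : ∀ (p q₁ q₂ : ℤ) (h₁ : p + n = q₁) (h₂ : p + n + 1 = q₂),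
        z.v p q₁ h₁ ≫ C.d q₁ q₂
          + (n + 1).negOnePow • Xc.d p (p + 1) ≫ z.v (p + 1) q₂ (by omega) = 0 := by
      intro p q₁ q₂ h₁ h₂
      have := Cochain.congr_v hz0' p q₂ (by omega)
      rw [δ_v n (n + 1) rfl z p q₂ (by omega) q₁ (p + 1) (by omega) rfl] at this
      simpa using this
    have hlift : ∀ (p : ℤ) (h : Xc.X p ⟶ C.X (p + n)), h ≫ C.d (p + n) (p + n + 1) = 0 →
        ∃ k : Xc.X p ⟶ C.X (p + n - 1), k ≫ C.d (p + n - 1) (p + n) = h :=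
      fun p h hh => hC (Xc.X p) (hmem p) (p + n) h hh
    obtain ⟨gf, hgf⟩ := exists_contraction Xc C n b hb (fun p q h => z.v p q h) hz hlift
    refine ⟨Cochain.mk (fun p q h => gf p q (by omega)), ?_⟩
    show δ (n - 1) n _ = z
    ext p q hpq
    rw [δ_v (n - 1) n (by omega) _ p q hpq (p + n - 1) (p + 1) (by omega) rfl]
    simp only [Cochain.mk_v]
    exact hgf p (p + n - 1) q rfl (by omega)
  · intro H Xo hXo m h hh
    have hmin : MinusComplexIn 𝒳 (sglCx Xo) := by
      refine ⟨⟨0, fun i hi => sglCx_isZero Xo (by omega)⟩, fun i => ?_⟩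
      by_cases hi : i = 0
      · subst hi; rw [sglCx_X_zero]; exact hXo
      · exact h0 _ (sglCx_isZero Xo hi)
    have hex := H (sglCx Xo) hmin m
    rw [HomologicalComplex.exactAt_iff' _ (m - 1) m (m + 1) (by simp) (by simp),
      ShortComplex.ab_exact_iff] at hex
    set zc : Cochain (sglCx Xo) C m :=
      Cochain.mk (fun p q hpq =>
        if hp : p = 0 then
          eqToHom (by rw [hp]; exact sglCx_X_zero Xo) ≫ h ≫ eqToHom (congrArg C.X (by omega))
        else 0) with hzc
    have hcast : ∀ (a b c : ℤ) (e : a = b), eqToHom (congrArg C.X e) ≫ C.d b c = C.d a c := by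
      rintro a b c rfl; simp
    have hδ : δ m (m + 1) zc = 0 := by
      ext p q hpq
      rw [δ_v m (m + 1) rfl zc p q hpq (q - 1) (p + 1) rfl rfl]
      simp only [hzc, Cochain.mk_v, sglCx_d, zero_comp, smul_zero, add_zero, Cochain.zero_v]
      by_cases hp : p = 0
      · subst hp
        obtain rfl : q = m + 1 := by omega
        rw [dif_pos rfl]
        simp only [Category.assoc]
        rw [hcast m (m + 1 - 1) (m + 1) (by omega)]
        simp [hh]
      · rw [dif_neg hp, zero_comp]
    obtain ⟨g, hg⟩ := hex zc hδ
    have hg' : δ (m - 1) m g = zc := hg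
    refine ⟨eqToHom (sglCx_X_zero Xo).symm ≫ g.v 0 (m - 1) (by omega), ?_⟩
    have hv := Cochain.congr_v hg' 0 m (by omega)
    rw [δ_v (m - 1) m (by omega) g 0 m (by omega) (m - 1) 1 (by omega) (by omega)] at hv
    simp only [hzc, Cochain.mk_v, sglCx_d, zero_comp, smul_zero, add_zero, dif_pos rfl] at hv
    simp only [eqToHom_refl, Category.comp_id] at hv
    rw [Category.assoc, hv]
    simp

end Aux
end

section
/- Any right 𝒳-quasi-isomorphism between two bounded-above complexes with components in 𝒳 is a homotopy equivalence. -/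
open CategoryTheory Limits

universe v u

variable {A : Type u} [Category.{v} A] [Abelian A]

open Classical in

/-- Auxiliary contracting homotopy maps, built by downward recursion. -/
noncomputable def contrMapAux (E : CochainComplex A ℤ) (b : ℤ)
    (hE : ∀ n : ℤ, ∀ u : E.X n ⟶ E.X n, u ≫ E.d n (n + 1) = 0 →
      ∃ k : E.X n ⟶ E.X (n - 1), k ≫ E.d (n - 1) n = u) :
    ∀ n : ℤ, E.X n ⟶ E.X (n - 1) := fun n =>
  if b < n then 0
  else
    let u : E.X n ⟶ E.X n := 𝟙 (E.X n) -
      E.d n (n + 1) ≫ contrMapAux E b hE (n + 1) ≫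
        eqToHom (congrArg E.X (by omega : n + 1 - 1 = n))
    if h : u ≫ E.d n (n + 1) = 0 then (hE n u h).choose else 0
termination_by n => (b + 1 - n).toNat
decreasing_by simp_wf; omega

lemma contrMapAux_comm (E : CochainComplex A ℤ) (b : ℤ)
    (hb : ∀ n : ℤ, b < n → IsZero (E.X n))
    (hE : ∀ n : ℤ, ∀ u : E.X n ⟶ E.X n, u ≫ E.d n (n + 1) = 0 →
      ∃ k : E.X n ⟶ E.X (n - 1), k ≫ E.d (n - 1) n = u) (n : ℤ) :
    𝟙 (E.X n) = contrMapAux E b hE n ≫ E.d (n - 1) n +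
      E.d n (n + 1) ≫ contrMapAux E b hE (n + 1) ≫
        eqToHom (congrArg E.X (by omega : n + 1 - 1 = n)) := by
  suffices H : ∀ k : ℕ, ∀ n : ℤ, (b + 1 - n).toNat ≤ k →
      𝟙 (E.X n) = contrMapAux E b hE n ≫ E.d (n - 1) n +
      E.d n (n + 1) ≫ contrMapAux E b hE (n + 1) ≫
        eqToHom (congrArg E.X (by omega : n + 1 - 1 = n)) by
    exact H (b + 1 - n).toNat n le_rfl
  intro k
  induction k with
  | zero =>
    intro n hn
    have hz : IsZero (E.X n) := hb n (by omega)
    exact hz.eq_of_src _ _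
  | succ k ih =>
    intro n hn
    by_cases hbn : b < n
    · exact (hb n hbn).eq_of_src _ _
    · set u : E.X n ⟶ E.X n := 𝟙 (E.X n) -
        E.d n (n + 1) ≫ contrMapAux E b hE (n + 1) ≫
          eqToHom (congrArg E.X (by omega : n + 1 - 1 = n)) with hu
      have hud : u ≫ E.d n (n + 1) = 0 := by
        have ih1 := ih (n + 1) (by omega)
        rw [hu, Preadditive.sub_comp, Category.id_comp]
        have gen : ∀ (p p' q : ℤ) (h : p = p'), eqToHom (congrArg E.X h) ≫ E.d p' q = E.d p q := by
          rintro p p' q rfl; simp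
        have : eqToHom (congrArg E.X (by omega : n + 1 - 1 = n)) ≫ E.d n (n + 1)
            = E.d (n + 1 - 1) (n + 1) := gen _ _ _ (by omega)
        rw [Category.assoc, Category.assoc, this]
        have := congrArg (fun v => E.d n (n + 1) ≫ v) ih1.symm
        simp only [Category.comp_id] at this
        calc E.d n (n + 1) - E.d n (n + 1) ≫ contrMapAux E b hE (n + 1) ≫ E.d (n + 1 - 1) (n + 1)
            = E.d n (n + 1) ≫ (𝟙 (E.X (n+1)) - contrMapAux E b hE (n + 1) ≫ E.d (n + 1 - 1) (n + 1)) := by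
              simp [Preadditive.comp_sub]
          _ = E.d n (n + 1) ≫ E.d (n + 1) (n + 1 + 1) ≫ contrMapAux E b hE (n + 1 + 1) ≫
                eqToHom (congrArg E.X (by omega : n + 1 + 1 - 1 = n + 1)) := by
              rw [ih (n+1) (by omega)]; simp
          _ = 0 := by rw [← Category.assoc, E.d_comp_d]; simp
      have hdef : contrMapAux E b hE n = (hE n u hud).choose := by
        rw [contrMapAux]
        rw [if_neg hbn, dif_pos hud]
      rw [hdef, (hE n u hud).choose_spec, hu]
      abel

noncomputable def contractionOfAcyclic (E : CochainComplex A ℤ) (b : ℤ)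
    (hb : ∀ n : ℤ, b < n → IsZero (E.X n))
    (hE : ∀ n : ℤ, ∀ u : E.X n ⟶ E.X n, u ≫ E.d n (n + 1) = 0 →
      ∃ k : E.X n ⟶ E.X (n - 1), k ≫ E.d (n - 1) n = u) :
    Homotopy (𝟙 E) (0 : E ⟶ E) where
  hom i j := if h : j + 1 = i then
      contrMapAux E b hE i ≫ eqToHom (congrArg E.X (by omega : i - 1 = j)) else 0
  zero i j h := dif_neg h
  comm i := by
    have hc := contrMapAux_comm E b hb hE i
    rw [dNext_eq _ (by simp : (ComplexShape.up ℤ).Rel i (i+1)),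
        prevD_eq _ (by simp : (ComplexShape.up ℤ).Rel (i-1) i)]
    rw [dif_pos (by omega : i - 1 + 1 = i), dif_pos rfl]
    simp only [HomologicalComplex.id_f, eqToHom_refl, Category.comp_id,
      HomologicalComplex.zero_f, add_zero]
    rw [hc]
    abel


theorem stmt4 (𝒳 : Set A) {C D : CochainComplex A ℤ} (hC : MinusComplexIn 𝒳 C)
    (hD : MinusComplexIn 𝒳 D) (f : C ⟶ D) (hf : RightQuasiIso 𝒳 f) :
    ∃ g : D ⟶ C, Nonempty (Homotopy (f ≫ g) (𝟙 C)) ∧ Nonempty (Homotopy (g ≫ f) (𝟙 D)) := by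
  obtain ⟨⟨bC, hbC⟩, hCX⟩ := hC
  obtain ⟨⟨bD, hbD⟩, hDX⟩ := hD
  have hf' : RightAcyclicComplex 𝒳 (CochainComplex.mappingCone f) := hf
  have hb : ∀ n : ℤ, max bC bD < n → IsZero ((CochainComplex.mappingCone f).X n) := by
    intro n hn
    rw [IsZero.iff_id_eq_zero, ← CochainComplex.mappingCone.id_X f n (n + 1) rfl]
    have h1 : (CochainComplex.mappingCone.inl f).v (n + 1) n (by omega) = 0 :=
      (hbC (n + 1) (by omega)).eq_of_src _ _
    have h2 : (CochainComplex.mappingCone.inr f).f n = 0 :=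
      (hbD n (by omega)).eq_of_src _ _
    rw [h1, h2]
    simp
  have hE : ∀ n : ℤ, ∀ u : (CochainComplex.mappingCone f).X n ⟶ (CochainComplex.mappingCone f).X n, u ≫ (CochainComplex.mappingCone f).d n (n + 1) = 0 →
      ∃ k : (CochainComplex.mappingCone f).X n ⟶ (CochainComplex.mappingCone f).X (n - 1), k ≫ (CochainComplex.mappingCone f).d (n - 1) n = u := by
    intro n u hu
    obtain ⟨k₁, hk₁⟩ := hf' (C.X (n + 1)) (hCX (n + 1)) n
      ((CochainComplex.mappingCone.inl f).v (n + 1) n (by omega) ≫ u)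
      (by rw [Category.assoc, hu, comp_zero])
    obtain ⟨k₂, hk₂⟩ := hf' (D.X n) (hDX n) n
      ((CochainComplex.mappingCone.inr f).f n ≫ u)
      (by rw [Category.assoc, hu, comp_zero])
    refine ⟨(CochainComplex.mappingCone.fst f).1.v n (n + 1) rfl ≫ k₁ +
      (CochainComplex.mappingCone.snd f).v n n (add_zero n) ≫ k₂, ?_⟩
    rw [Preadditive.add_comp, Category.assoc, Category.assoc, hk₁, hk₂,
      ← Category.assoc, ← Category.assoc, ← Preadditive.add_comp,
      CochainComplex.mappingCone.id_X f n (n + 1) rfl, Category.id_comp]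
  have ht : Homotopy (𝟙 (CochainComplex.mappingCone f)) (0 : CochainComplex.mappingCone f ⟶ CochainComplex.mappingCone f) := contractionOfAcyclic (CochainComplex.mappingCone f) (max bC bD) hb hE
  have hz : IsZero ((HomotopyCategory.quotient A (ComplexShape.up ℤ)).obj (CochainComplex.mappingCone f)) :=
    (HomotopyCategory.isZero_quotient_obj_iff (CochainComplex.mappingCone f)).2 ⟨ht⟩
  have hiso : IsIso ((HomotopyCategory.quotient A (ComplexShape.up ℤ)).map f) :=
    (Pretriangulated.Triangle.isZero₃_iff_isIso₁ _
      (HomotopyCategory.mappingCone_triangleh_distinguished f)).1 hz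
  let e : HomotopyEquiv C D := HomotopyCategory.homotopyEquivOfIso
    (asIso ((HomotopyCategory.quotient A (ComplexShape.up ℤ)).map f))
  have hef : Homotopy e.hom f := HomotopyCategory.homotopyOfEq _ _
    ((HomotopyCategory.quotient_map_out _).trans (by simp))
  exact ⟨e.inv, ⟨(hef.symm.compRight e.inv).trans e.homotopyHomInvId⟩,
    ⟨(hef.symm.compLeft e.inv).trans e.homotopyInvHomId⟩⟩
end

section
/- Let (𝒳, 𝒴) be a balanced pair in an abelian category 𝒜 and (𝒞, 𝒟) a cotorsion pair relative to (𝒳, 𝒴). Then both 𝒞 and 𝒟 are closed under ⁎-extensions: for any short exact sequence 0 → L → M → N → 0 which is both right 𝒳-acyclic and left 𝒴-acyclic, if L and N lie in 𝒞 (resp. 𝒟), then M lies in 𝒞 (resp. 𝒟). -/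
open CategoryTheory Limits

universe v u

variable {A : Type u} [Category.{v} A] [Abelian A]

private lemma liftEq {X P Q : A} (a : X ⟶ P) (b : X ⟶ Q) :
    biprod.lift a b = a ≫ biprod.inl + b ≫ biprod.inr := by
  apply biprod.hom_ext <;> simp

private lemma compDesc {Z P Q W : A} (f : Z ⟶ P ⊞ Q) (u : P ⟶ W) (v : Q ⟶ W) :
    f ≫ biprod.desc u v = (f ≫ biprod.fst) ≫ u + (f ≫ biprod.snd) ≫ v := by
  rw [show biprod.desc u v = biprod.fst ≫ u + biprod.snd ≫ v from by
    apply biprod.hom_ext' <;> simp]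
  simp [Preadditive.comp_add]

private lemma liftDescLift {X P' Q' P Q : A} (a1 : X ⟶ P') (b1 : X ⟶ Q')
    (u : P' ⟶ P) (t : Q' ⟶ P) (v : Q' ⟶ Q) :
    biprod.lift a1 b1 ≫ biprod.desc (u ≫ biprod.inl) (biprod.lift t v) =
      biprod.lift (a1 ≫ u + b1 ≫ t) (b1 ≫ v) := by
  rw [biprod.lift_desc]
  apply biprod.hom_ext <;> simp

private theorem extTransfer {𝒳 : Set A} {M D : A} (P : CochainComplex A ℤ) (ε : P.X 0 ⟶ M)
    (hP : IsProperXResolution 𝒳 M P ε)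
    {Q0 Q1 Q2 : A} (ε' : Q0 ⟶ M) (d1 : Q1 ⟶ Q0) (d2 : Q2 ⟶ Q1)
    (hdd : d2 ≫ d1 = 0) (hd1ε : d1 ≫ ε' = 0)
    (L0 : ∀ h : Q0 ⟶ M, ∃ k : Q0 ⟶ P.X 0, k ≫ ε = h)
    (L1 : ∀ h : Q1 ⟶ P.X 0, h ≫ ε = 0 → ∃ k : Q1 ⟶ P.X (-1), k ≫ P.d (-1) 0 = h)
    (L2 : ∀ h : Q2 ⟶ P.X (-1), h ≫ P.d (-1) 0 = 0 → ∃ k : Q2 ⟶ P.X (-2), k ≫ P.d (-2) (-1) = h)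
    (Qsurj : ∀ h : P.X 0 ⟶ M, ∃ k : P.X 0 ⟶ Q0, k ≫ ε' = h)
    (Qex0 : ∀ h : P.X (-1) ⟶ Q0, h ≫ ε' = 0 → ∃ k : P.X (-1) ⟶ Q1, k ≫ d1 = h)
    (Qext : ∀ h : Q1 ⟶ D, d2 ≫ h = 0 → ∃ k : Q0 ⟶ D, d1 ≫ k = h) :
    ∀ h : P.X (-1) ⟶ D, P.d (-2) (-1) ≫ h = 0 → ∃ k : P.X 0 ⟶ D, P.d (-1) 0 ≫ k = h := by
  intro h hcoc
  obtain ⟨-, hmem, hdε, hlift⟩ := hP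
  obtain ⟨u0, hu0⟩ := Qsurj ε
  obtain ⟨u1, hu1⟩ := Qex0 (P.d (-1) 0 ≫ u0) (by rw [Category.assoc, hu0, hdε])
  obtain ⟨v0, hv0⟩ := L0 ε'
  obtain ⟨v1, hv1⟩ := L1 (d1 ≫ v0) (by rw [Category.assoc, hv0, hd1ε])
  obtain ⟨v2, hv2⟩ := L2 (d2 ≫ v1) (by rw [Category.assoc, hv1, ← Category.assoc, hdd, zero_comp])
  obtain ⟨s0, hs0⟩ := (hlift (P.X 0) (hmem 0 le_rfl)).2.1 (u0 ≫ v0 - 𝟙 _)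
    (by simp [hv0, hu0])
  obtain ⟨s1, hs1⟩ := (hlift (P.X (-1)) (hmem (-1) (by norm_num))).2.2 (-1) (by norm_num)
    (u1 ≫ v1 - 𝟙 _ - P.d (-1) 0 ≫ s0)
    (by
      have : ((-1 : ℤ) + 1) = 0 := rfl
      rw [this]
      simp only [Preadditive.sub_comp, Category.assoc, hv1, hs0, Category.id_comp]
      rw [← Category.assoc u1 d1 v0, hu1]
      simp [Preadditive.comp_sub])
  obtain ⟨k', hk'⟩ := Qext (v1 ≫ h)
    (by rw [← Category.assoc, ← hv2, Category.assoc, hcoc, comp_zero])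
  refine ⟨u0 ≫ k' - s0 ≫ h, ?_⟩
  have hs1' : (u1 ≫ v1 - 𝟙 _ - P.d (-1) 0 ≫ s0) ≫ h = 0 := by
    rw [← hs1, Category.assoc]
    show s1 ≫ P.d (-2) (-1) ≫ h = 0
    rw [hcoc, comp_zero]
  have expand : u1 ≫ v1 ≫ h - h - P.d (-1) 0 ≫ s0 ≫ h = 0 := by
    simpa [Preadditive.sub_comp, Category.assoc] using hs1'
  rw [Preadditive.comp_sub, ← Category.assoc, ← Category.assoc]
  rw [show P.d (-1) 0 ≫ u0 = u1 ≫ d1 from hu1.symm]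
  rw [Category.assoc, hk', ← Category.assoc]
  simp only [Category.assoc] at expand ⊢
  rw [sub_sub, sub_eq_zero] at expand
  rw [expand]
  abel

theorem stmt6 (𝒳 𝒴 𝒞 𝒟 : Set A) (hbp : IsBalancedPair 𝒳 𝒴)
    (hcp : IsRelCotorsionPair 𝒳 𝒞 𝒟) :
    (∀ S : ShortComplex A, SESStarAcyclic 𝒳 𝒴 S → S.X₁ ∈ 𝒞 → S.X₃ ∈ 𝒞 → S.X₂ ∈ 𝒞) ∧
    (∀ S : ShortComplex A, SESStarAcyclic 𝒳 𝒴 S → S.X₁ ∈ 𝒟 → S.X₃ ∈ 𝒟 → S.X₂ ∈ 𝒟) := by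
  constructor
  · intro S hS hL hN
    obtain ⟨hse, hra, -⟩ := hS
    haveI := hse.mono_f
    refine (hcp.1 S.X₂).mpr ?_
    intro D hD P ε hP
    obtain ⟨PL, εL, hPL, -⟩ := hbp.2.2.1 S.X₁
    obtain ⟨PN, εN, hPN, -⟩ := hbp.2.2.1 S.X₃
    have vanL : ∀ h : PL.X (-1) ⟶ D, PL.d (-2) (-1) ≫ h = 0 →
        ∃ k : PL.X 0 ⟶ D, PL.d (-1) 0 ≫ k = h := (hcp.1 S.X₁).mp hL D hD PL εL hPL
    have vanN : ∀ h : PN.X (-1) ⟶ D, PN.d (-2) (-1) ≫ h = 0 →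
        ∃ k : PN.X 0 ⟶ D, PN.d (-1) 0 ≫ k = h := (hcp.1 S.X₃).mp hN D hD PN εN hPN
    have mL0 : PL.X 0 ∈ 𝒳 := hPL.2.1 0 le_rfl
    have mL1 : PL.X (-1) ∈ 𝒳 := hPL.2.1 (-1) (by norm_num)
    have mL2 : PL.X (-2) ∈ 𝒳 := hPL.2.1 (-2) (by norm_num)
    have mN0 : PN.X 0 ∈ 𝒳 := hPN.2.1 0 le_rfl
    have mN1 : PN.X (-1) ∈ 𝒳 := hPN.2.1 (-1) (by norm_num)
    have mN2 : PN.X (-2) ∈ 𝒳 := hPN.2.1 (-2) (by norm_num)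
    have hX0 : P.X 0 ∈ 𝒳 := hP.2.1 0 le_rfl
    have hX1 : P.X (-1) ∈ 𝒳 := hP.2.1 (-1) (by norm_num)
    obtain ⟨τ0, hτ0⟩ := (hra (PN.X 0) mN0).2.2 εN
    simp only at hτ0
    obtain ⟨lam1, hlam1⟩ := (hra (PN.X (-1)) mN1).2.1 (PN.d (-1) 0 ≫ τ0)
      (by rw [Category.assoc, hτ0, hPN.2.2.1])
    obtain ⟨θ1', hθ1'⟩ := (hPL.2.2.2 (PN.X (-1)) mN1).1 lam1
    obtain ⟨θ2, hθ2⟩ := (hPL.2.2.2 (PN.X (-2)) mN2).2.1 (PN.d (-2) (-1) ≫ θ1')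
      (by
        rw [Category.assoc, hθ1', ← cancel_mono S.f, zero_comp, Category.assoc, hlam1,
          ← Category.assoc, HomologicalComplex.d_comp_d, zero_comp])
    set θ1 : PN.X (-1) ⟶ PL.X 0 := -θ1' with hθ1def
    set ε' : PL.X 0 ⊞ PN.X 0 ⟶ S.X₂ := biprod.desc (εL ≫ S.f) τ0 with hε'
    set d1 : PL.X (-1) ⊞ PN.X (-1) ⟶ PL.X 0 ⊞ PN.X 0 :=
      biprod.desc (PL.d (-1) 0 ≫ biprod.inl) (biprod.lift θ1 (PN.d (-1) 0)) with hd1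
    set d2 : PL.X (-2) ⊞ PN.X (-2) ⟶ PL.X (-1) ⊞ PN.X (-1) :=
      biprod.desc (PL.d (-2) (-1) ≫ biprod.inl) (biprod.lift θ2 (PN.d (-2) (-1))) with hd2
    have hθ1εf : θ1 ≫ εL ≫ S.f = -(PN.d (-1) 0 ≫ τ0) := by
      rw [hθ1def, Preadditive.neg_comp, ← Category.assoc, hθ1', hlam1]
    have hθ1θ2 : θ2 ≫ PL.d (-1) 0 + PN.d (-2) (-1) ≫ θ1 = 0 := by
      rw [hθ2, hθ1def, Preadditive.comp_neg, add_neg_cancel]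
    have hdd : d2 ≫ d1 = 0 := by
      apply biprod.hom_ext'
      · rw [hd2, hd1, comp_zero]
        rw [biprod.inl_desc_assoc, Category.assoc, biprod.inl_desc,
          HomologicalComplex.d_comp_d_assoc, zero_comp]
      · rw [hd2, hd1, comp_zero, biprod.inr_desc_assoc, liftDescLift, hθ1θ2,
          HomologicalComplex.d_comp_d]
        apply biprod.hom_ext <;> simp
    have hd1ε : d1 ≫ ε' = 0 := by
      apply biprod.hom_ext'
      · rw [hd1, hε', comp_zero, biprod.inl_desc_assoc, Category.assoc, biprod.inl_desc,
          ← Category.assoc, hPL.2.2.1, zero_comp]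
      · rw [hd1, hε', comp_zero, biprod.inr_desc_assoc, biprod.lift_desc, hθ1εf, neg_add_cancel]
    have L0 : ∀ h : (PL.X 0 ⊞ PN.X 0) ⟶ S.X₂, ∃ k, k ≫ ε = h := by
      intro hh
      obtain ⟨kL, hkL⟩ := (hP.2.2.2 _ mL0).1 (biprod.inl ≫ hh)
      obtain ⟨kN, hkN⟩ := (hP.2.2.2 _ mN0).1 (biprod.inr ≫ hh)
      refine ⟨biprod.desc kL kN, ?_⟩
      apply biprod.hom_ext' <;> simp [hkL, hkN]
    have L1 : ∀ h : (PL.X (-1) ⊞ PN.X (-1)) ⟶ P.X 0, h ≫ ε = 0 →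
        ∃ k, k ≫ P.d (-1) 0 = h := by
      intro hh hhe
      obtain ⟨kL, hkL⟩ := (hP.2.2.2 _ mL1).2.1 (biprod.inl ≫ hh)
        (by rw [Category.assoc, hhe, comp_zero])
      obtain ⟨kN, hkN⟩ := (hP.2.2.2 _ mN1).2.1 (biprod.inr ≫ hh)
        (by rw [Category.assoc, hhe, comp_zero])
      refine ⟨biprod.desc kL kN, ?_⟩
      apply biprod.hom_ext' <;> simp [hkL, hkN]
    have L2 : ∀ h : (PL.X (-2) ⊞ PN.X (-2)) ⟶ P.X (-1), h ≫ P.d (-1) 0 = 0 →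
        ∃ k : (PL.X (-2) ⊞ PN.X (-2)) ⟶ P.X (-2), k ≫ P.d (-2) (-1) = h := by
      intro hh hhe
      have exL : ∀ h : PL.X (-2) ⟶ P.X (-1), h ≫ P.d (-1) 0 = 0 →
          ∃ k : PL.X (-2) ⟶ P.X (-2), k ≫ P.d (-2) (-1) = h :=
        (hP.2.2.2 _ mL2).2.2 (-1) (by norm_num)
      have exN : ∀ h : PN.X (-2) ⟶ P.X (-1), h ≫ P.d (-1) 0 = 0 →
          ∃ k : PN.X (-2) ⟶ P.X (-2), k ≫ P.d (-2) (-1) = h :=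
        (hP.2.2.2 _ mN2).2.2 (-1) (by norm_num)
      obtain ⟨kL, hkL⟩ := exL (biprod.inl ≫ hh) (by rw [Category.assoc, hhe, comp_zero])
      obtain ⟨kN, hkN⟩ := exN (biprod.inr ≫ hh) (by rw [Category.assoc, hhe, comp_zero])
      refine ⟨biprod.desc kL kN, ?_⟩
      apply biprod.hom_ext' <;> simp [hkL, hkN]
    have Qsurj : ∀ h : P.X 0 ⟶ S.X₂, ∃ k : P.X 0 ⟶ PL.X 0 ⊞ PN.X 0, k ≫ ε' = h := by
      intro hh
      obtain ⟨b, hb⟩ := (hPN.2.2.2 _ hX0).1 (hh ≫ S.g)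
      obtain ⟨a', ha'⟩ := (hra _ hX0).2.1 (hh - b ≫ τ0)
        (by rw [Preadditive.sub_comp, Category.assoc, hτ0, hb, sub_self])
      obtain ⟨a, ha⟩ := (hPL.2.2.2 _ hX0).1 a'
      refine ⟨biprod.lift a b, ?_⟩
      rw [hε', biprod.lift_desc, ← Category.assoc, ha, ha']
      abel
    have Qex0 : ∀ h : P.X (-1) ⟶ PL.X 0 ⊞ PN.X 0, h ≫ ε' = 0 →
        ∃ k : P.X (-1) ⟶ PL.X (-1) ⊞ PN.X (-1), k ≫ d1 = h := by
      intro hh hhe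
      have hhh : biprod.lift (hh ≫ biprod.fst) (hh ≫ biprod.snd) = hh := by
        apply biprod.hom_ext <;> simp
      have hcond : (hh ≫ biprod.fst) ≫ (εL ≫ S.f) + (hh ≫ biprod.snd) ≫ τ0 = 0 := by
        rw [← compDesc, ← hε', hhe]
      have hbN : (hh ≫ biprod.snd) ≫ εN = 0 := by
        have hbτ : (hh ≫ biprod.snd) ≫ τ0 = -((hh ≫ biprod.fst) ≫ (εL ≫ S.f)) := by
          rw [eq_neg_iff_add_eq_zero, add_comm]; exact hcond
        rw [← hτ0, ← Category.assoc, hbτ, Preadditive.neg_comp, Category.assoc,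
          Category.assoc, Category.assoc, S.zero]
        simp
      obtain ⟨b1, hb1⟩ := (hPN.2.2.2 _ hX1).2.1 (hh ≫ biprod.snd) hbN
      have haL : (hh ≫ biprod.fst - b1 ≫ θ1) ≫ εL = 0 := by
        rw [← cancel_mono S.f, zero_comp]
        simp only [Preadditive.sub_comp, Category.assoc]
        rw [hθ1εf, Preadditive.comp_neg, sub_neg_eq_add, ← Category.assoc b1, hb1]
        simpa [Category.assoc] using hcond
      obtain ⟨a1, ha1⟩ := (hPL.2.2.2 _ hX1).2.1 _ haL
      refine ⟨biprod.lift a1 b1, ?_⟩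
      rw [← hhh, hd1, liftDescLift, ha1, hb1]
      congr 1
      abel
    have Qext : ∀ h : (PL.X (-1) ⊞ PN.X (-1)) ⟶ D, d2 ≫ h = 0 →
        ∃ k : (PL.X 0 ⊞ PN.X 0) ⟶ D, d1 ≫ k = h := by
      intro hh hc2
      have hα : PL.d (-2) (-1) ≫ (biprod.inl ≫ hh) = 0 := by
        have := biprod.inl ≫= hc2
        rwa [hd2, biprod.inl_desc_assoc, Category.assoc, comp_zero] at this
      have hβ : θ2 ≫ (biprod.inl ≫ hh) + PN.d (-2) (-1) ≫ (biprod.inr ≫ hh) = 0 := by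
        have := biprod.inr ≫= hc2
        rwa [hd2, biprod.inr_desc_assoc, comp_zero, liftEq, Preadditive.add_comp,
          Category.assoc, Category.assoc] at this
      obtain ⟨κ, hκ⟩ := vanL (biprod.inl ≫ hh) hα
      have hco : PN.d (-2) (-1) ≫ (biprod.inr ≫ hh - θ1 ≫ κ) = 0 := by
        rw [Preadditive.comp_sub]
        have h1 : PN.d (-2) (-1) ≫ θ1 ≫ κ = -(θ2 ≫ (biprod.inl ≫ hh)) := by
          rw [hθ1def, Preadditive.neg_comp, Preadditive.comp_neg, neg_inj,
            ← Category.assoc, ← hθ2, Category.assoc, hκ]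
        rw [h1, sub_neg_eq_add, add_comm]
        exact hβ
      obtain ⟨μ, hμ⟩ := vanN _ hco
      refine ⟨biprod.desc κ μ, ?_⟩
      apply biprod.hom_ext'
      · rw [hd1, biprod.inl_desc_assoc, Category.assoc, biprod.inl_desc, hκ]
      · rw [hd1, biprod.inr_desc_assoc, biprod.lift_desc, hμ]
        abel
    exact extTransfer P ε hP ε' d1 d2 hdd hd1ε L0 L1 L2 Qsurj Qex0 Qext
  · intro S hS hL hN
    obtain ⟨hse, hra, -⟩ := hS
    haveI := hse.mono_f
    refine (hcp.2 S.X₂).mpr ?_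
    intro C hC P ε hP h0 hcoc0
    have vanL : ∀ h : P.X (-1) ⟶ S.X₁, P.d (-2) (-1) ≫ h = 0 →
        ∃ k : P.X 0 ⟶ S.X₁, P.d (-1) 0 ≫ k = h := (hcp.2 S.X₁).mp hL C hC P ε hP
    have vanN : ∀ h : P.X (-1) ⟶ S.X₃, P.d (-2) (-1) ≫ h = 0 →
        ∃ k : P.X 0 ⟶ S.X₃, P.d (-1) 0 ≫ k = h := (hcp.2 S.X₃).mp hN C hC P ε hP
    have hX0 : P.X 0 ∈ 𝒳 := hP.2.1 0 le_rfl
    have hX1 : P.X (-1) ∈ 𝒳 := hP.2.1 (-1) (by norm_num)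
    -- normalize indices
    have hcoc : P.d (-2) (-1) ≫ h0 = 0 := hcoc0
    show ∃ k : P.X 0 ⟶ S.X₂, P.d (-1) 0 ≫ k = h0
    obtain ⟨kN, hkN⟩ := vanN (h0 ≫ S.g)
      (by rw [← Category.assoc, hcoc, zero_comp])
    obtain ⟨m, hm⟩ := (hra (P.X 0) hX0).2.2 kN
    simp only at hm
    obtain ⟨l, hl⟩ := (hra (P.X (-1)) hX1).2.1 (h0 - P.d (-1) 0 ≫ m)
      (by rw [Preadditive.sub_comp, Category.assoc, hm, hkN, sub_self])
    have hlcoc : P.d (-2) (-1) ≫ l = 0 := by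
      rw [← cancel_mono S.f, Category.assoc, hl, Preadditive.comp_sub, hcoc,
        ← Category.assoc, HomologicalComplex.d_comp_d]
      simp
    obtain ⟨kL, hkL⟩ := vanL l hlcoc
    refine ⟨kL ≫ S.f + m, ?_⟩
    rw [Preadditive.comp_add, ← Category.assoc, hkL, hl]
    abel
end

section
/- Let (𝒳, 𝒴) be a balanced pair in an abelian category 𝒜. Then 𝒳 is admissible (every right 𝒳-approximation is an epimorphism) if and only if 𝒴 is coadmissible (every left 𝒴-approximation is a monomorphism). -/
open CategoryTheory Limits

universe v u

variable {A : Type u} [Category.{v} A] [Abelian A]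

theorem stmt8 (𝒳 𝒴 : Set A) (hbp : IsBalancedPair 𝒳 𝒴) :
    XAdmissible 𝒳 ↔ YCoadmissible 𝒴 := by
  obtain ⟨hX, hY, hres, hcores⟩ := hbp
  constructor
  · intro hadm M Y f hf
    -- take the right 𝒳-acyclic proper 𝒴-coresolution of M
    obtain ⟨Q, η, hQ, hQac⟩ := hcores M
    -- η is mono
    have hη : Mono η := by
      rw [Preadditive.mono_iff_cancel_zero]
      intro T g hg
      obtain ⟨X, p, hp⟩ := hX T
      have hpe : Epi p := hadm _ _ p hp
      have h0 : p ≫ g = 0 := by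
        have := (hQac X hp.1).1 (p ≫ g) (by rw [Category.assoc, hg, comp_zero])
        exact this
      rw [← cancel_epi p, h0, comp_zero]
    -- η factors through f since Q.X 0 ∈ 𝒴
    obtain ⟨h, hh⟩ := hf.2 (Q.X 0) (hQ.2.1 0 le_rfl) η
    rw [Preadditive.mono_iff_cancel_zero]
    intro T g hg
    have : g ≫ η = 0 := by rw [← hh, ← Category.assoc, hg, zero_comp]
    exact (cancel_mono η).mp (by rw [this, zero_comp])
  · intro hco X M f hf
    obtain ⟨P, ε, hP, hPac⟩ := hres M
    -- ε is epi
    have hε : Epi ε := by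
      rw [Preadditive.epi_iff_cancel_zero]
      intro T g hg
      obtain ⟨Y, j, hj⟩ := hY T
      have hjm : Mono j := hco _ _ j hj
      have h0 : g ≫ j = 0 := by
        have := (hPac Y hj.1).1 (g ≫ j) (by rw [← Category.assoc, hg, zero_comp])
        exact this
      rw [← cancel_mono j, h0, zero_comp]
    -- ε factors through f since P.X 0 ∈ 𝒳
    obtain ⟨h, hh⟩ := hf.2 (P.X 0) (hP.2.1 0 le_rfl) ε
    rw [Preadditive.epi_iff_cancel_zero]
    intro T g hg
    have : ε ≫ g = 0 := by rw [← hh, Category.assoc, hg, comp_zero]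
    exact (cancel_epi ε).mp (by rw [this, comp_zero])
end

section
/- Let (𝒳, 𝒴) be an admissible balanced pair in an abelian category 𝒜 and (𝒞, 𝒟) a relative cotorsion pair. Then (𝒞, 𝒟) has enough projectives (for every M there exists a ⁎-acyclic sequence 0 → D → C → M → 0 with C ∈ 𝒞, D ∈ 𝒟) if and only if it has enough injectives (for every M there exists a ⁎-acyclic sequence 0 → M → D → C → 0 with C ∈ 𝒞, D ∈ 𝒟). -/
open CategoryTheory Limits

universe v u

variable {A : Type u} [Category.{v} A] [Abelian A]

section Helpers

variable {𝒳 𝒴 : Set A}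

lemma cancel_from_X (h1 : ∀ M : A, ∃ (X : A) (f : X ⟶ M), IsRightApprox 𝒳 f)
    (hadm : XAdmissible 𝒳) {W M : A} (t : W ⟶ M)
    (h : ∀ X, X ∈ 𝒳 → ∀ u : X ⟶ W, u ≫ t = 0) : t = 0 := by
  obtain ⟨X, f, hf⟩ := h1 W
  have hb : Epi f := hadm _ _ f hf
  have h2 := h X hf.1 f
  rwa [← cancel_epi f, comp_zero]

lemma gamma_epi (h1 : ∀ M : A, ∃ (X : A) (f : X ⟶ M), IsRightApprox 𝒳 f)
    (hadm : XAdmissible 𝒳) {M : A} {P : CochainComplex A ℤ} {ε : P.X 0 ⟶ M}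
    (hP : IsProperXResolution 𝒳 M P ε) :
    Epi (kernel.lift ε (P.d (-1) 0) hP.2.2.1) := by
  obtain ⟨X, e, he⟩ := h1 (kernel ε)
  have hXe : Epi e := hadm _ _ e he
  have h0 : (e ≫ kernel.ι ε) ≫ ε = 0 := by simp
  obtain ⟨u, hu⟩ := (hP.2.2.2 X he.1).2.1 (e ≫ kernel.ι ε) h0
  have hfac : u ≫ kernel.lift ε (P.d (-1) 0) hP.2.2.1 = e := by
    rw [← cancel_mono (kernel.ι ε), Category.assoc, kernel.lift_ι, hu]
  exact epi_of_epi_fac hfac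

/-- Vanishing of degree-1 cocycles into `N` implies the extension property for `ker ε`. -/
lemma van_to_ext (h1 : ∀ M : A, ∃ (X : A) (f : X ⟶ M), IsRightApprox 𝒳 f)
    (hadm : XAdmissible 𝒳) {M N : A} {P : CochainComplex A ℤ} {ε : P.X 0 ⟶ M}
    (hP : IsProperXResolution 𝒳 M P ε)
    (hv : ∀ h : P.X (-1) ⟶ N, P.d (-2) (-1) ≫ h = 0 → ∃ k : P.X 0 ⟶ N, P.d (-1) 0 ≫ k = h) :
    ∀ t : kernel ε ⟶ N, ∃ k : P.X 0 ⟶ N, kernel.ι ε ≫ k = t := by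
  intro t
  haveI : Epi (kernel.lift ε (P.d (-1) 0) hP.2.2.1) := gamma_epi h1 hadm hP
  set γ := kernel.lift ε (P.d (-1) 0) hP.2.2.1 with hγ
  have hγι : γ ≫ kernel.ι ε = P.d (-1) 0 := kernel.lift_ι _ _ _
  have hdγ : P.d (-2) (-1) ≫ γ = 0 := by
    rw [← cancel_mono (kernel.ι ε), Category.assoc, hγι, P.d_comp_d, zero_comp]
  have hc : P.d (-2) (-1) ≫ (γ ≫ t) = 0 := by
    rw [← Category.assoc, hdγ, zero_comp]
  obtain ⟨k, hk⟩ := hv (γ ≫ t) hc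
  refine ⟨k, ?_⟩
  rw [← cancel_epi γ, ← Category.assoc, hγι, hk]

/-- The extension property for `ker ε` implies vanishing of degree-1 cocycles into `N`. -/
lemma ext_to_van (h1 : ∀ M : A, ∃ (X : A) (f : X ⟶ M), IsRightApprox 𝒳 f)
    (hadm : XAdmissible 𝒳) {M N : A} {P : CochainComplex A ℤ} {ε : P.X 0 ⟶ M}
    (hP : IsProperXResolution 𝒳 M P ε)
    (he : ∀ t : kernel ε ⟶ N, ∃ k : P.X 0 ⟶ N, kernel.ι ε ≫ k = t) :
    ∀ h : P.X (-1) ⟶ N, P.d (-2) (-1) ≫ h = 0 → ∃ k : P.X 0 ⟶ N, P.d (-1) 0 ≫ k = h := by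
  intro h hc
  haveI : Epi (kernel.lift ε (P.d (-1) 0) hP.2.2.1) := gamma_epi h1 hadm hP
  set γ := kernel.lift ε (P.d (-1) 0) hP.2.2.1 with hγ
  have hγι : γ ≫ kernel.ι ε = P.d (-1) 0 := kernel.lift_ι _ _ _
  -- h kills the kernel of γ
  obtain ⟨X, e, hea⟩ := h1 (kernel γ)
  haveI : Epi e := hadm _ _ e hea
  have h0 : (e ≫ kernel.ι γ) ≫ P.d (-1) 0 = 0 := by
    simp [← hγι]
  obtain ⟨u, hu⟩ := (hP.2.2.2 X hea.1).2.2 (-1) (by norm_num) (e ≫ kernel.ι γ) h0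
  have hc' : P.d (-1-1) (-1) ≫ h = 0 := hc
  have hκ : kernel.ι γ ≫ h = 0 := by
    rw [← cancel_epi e, comp_zero, ← Category.assoc, ← hu, Category.assoc, hc', comp_zero]
  obtain ⟨k, hk⟩ := he (Abelian.epiDesc γ h hκ)
  refine ⟨k, ?_⟩
  calc P.d (-1) 0 ≫ k = γ ≫ (kernel.ι ε ≫ k) := by rw [← Category.assoc, hγι]
    _ = γ ≫ Abelian.epiDesc γ h hκ := by rw [hk]
    _ = h := Abelian.comp_epiDesc _ _ _

end Helpers
section Helpers2

variable {𝒳 𝒴 : Set A}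

/-- Extension property transfers between two epimorphism-like maps onto `M`. -/
lemma ext_transfer {M W P₀ N : A} {ρ : W ⟶ M} {ε : P₀ ⟶ M}
    (s₀ : P₀ ⟶ W) (hs : s₀ ≫ ρ = ε) (r₀ : W ⟶ P₀) (hr : r₀ ≫ ε = ρ)
    (hext : ∀ t : kernel ε ⟶ N, ∃ k : P₀ ⟶ N, kernel.ι ε ≫ k = t) :
    ∀ t : kernel ρ ⟶ N, ∃ k : W ⟶ N, kernel.ι ρ ≫ k = t := by
  intro t
  have hc0 : (r₀ ≫ s₀ - 𝟙 W) ≫ ρ = 0 := by simp [hs, hr]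
  set c := kernel.lift ρ (r₀ ≫ s₀ - 𝟙 W) hc0 with hcdef
  have hcι : c ≫ kernel.ι ρ = r₀ ≫ s₀ - 𝟙 W := kernel.lift_ι _ _ _
  have hsk : (kernel.ι ε ≫ s₀) ≫ ρ = 0 := by rw [Category.assoc, hs, kernel.condition]
  set sb := kernel.lift ρ (kernel.ι ε ≫ s₀) hsk with hsbdef
  have hsbι : sb ≫ kernel.ι ρ = kernel.ι ε ≫ s₀ := kernel.lift_ι _ _ _
  have hrk : (kernel.ι ρ ≫ r₀) ≫ ε = 0 := by rw [Category.assoc, hr, kernel.condition]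
  set rb := kernel.lift ε (kernel.ι ρ ≫ r₀) hrk with hrbdef
  have hrbι : rb ≫ kernel.ι ε = kernel.ι ρ ≫ r₀ := kernel.lift_ι _ _ _
  obtain ⟨kP, hkP⟩ := hext (sb ≫ t)
  have key : rb ≫ sb = 𝟙 (kernel ρ) + kernel.ι ρ ≫ c := by
    have h1' : (rb ≫ sb) ≫ kernel.ι ρ = kernel.ι ρ ≫ (r₀ ≫ s₀) := by
      rw [Category.assoc, hsbι, ← Category.assoc, hrbι, Category.assoc]
    have h2' : (𝟙 (kernel ρ) + kernel.ι ρ ≫ c) ≫ kernel.ι ρ = kernel.ι ρ ≫ (r₀ ≫ s₀) := by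
      rw [Preadditive.add_comp, Category.id_comp, Category.assoc, hcι, Preadditive.comp_sub,
        Category.comp_id]
      abel
    rw [← cancel_mono (kernel.ι ρ), h1', h2']
  refine ⟨r₀ ≫ kP - c ≫ t, ?_⟩
  rw [Preadditive.comp_sub, ← Category.assoc, ← hrbι, Category.assoc, hkP, ← Category.assoc, key]
  simp

/-- Maps from the kernel of the augmentation of a left-`𝒴`-acyclic proper resolution
extend along the kernel inclusion, for targets in `𝒴`. -/
lemma special_ext_Y (h1 : ∀ M : A, ∃ (X : A) (f : X ⟶ M), IsRightApprox 𝒳 f)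
    (hadm : XAdmissible 𝒳) {M : A} {P : CochainComplex A ℤ} {ε : P.X 0 ⟶ M}
    (hP : IsProperXResolution 𝒳 M P ε) (haug : AugResLeftAcyclic 𝒴 M P ε)
    {Y : A} (hY : Y ∈ 𝒴) :
    ∀ t : kernel ε ⟶ Y, ∃ k : P.X 0 ⟶ Y, kernel.ι ε ≫ k = t := by
  intro t
  haveI : Epi (kernel.lift ε (P.d (-1) 0) hP.2.2.1) := gamma_epi h1 hadm hP
  set γ := kernel.lift ε (P.d (-1) 0) hP.2.2.1 with hγ
  have hγι : γ ≫ kernel.ι ε = P.d (-1) 0 := kernel.lift_ι _ _ _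
  have hdγ : P.d (-2) (-1) ≫ γ = 0 := by
    rw [← cancel_mono (kernel.ι ε), Category.assoc, hγι, P.d_comp_d, zero_comp]
  have hc : P.d (-1 - 1) (-1) ≫ (γ ≫ t) = 0 := by
    show P.d (-2) (-1) ≫ (γ ≫ t) = 0
    rw [← Category.assoc, hdγ, zero_comp]
  obtain ⟨k, hk⟩ := (haug Y hY).2.2 (-1) (by norm_num) (γ ≫ t) hc
  have hk' : P.d (-1) 0 ≫ k = γ ≫ t := hk
  refine ⟨k, ?_⟩
  rw [← cancel_epi γ, ← Category.assoc, hγι, hk']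

lemma extVanish_into_Y (hbp : IsBalancedPair 𝒳 𝒴) (hadm : XAdmissible 𝒳)
    {Y : A} (hY : Y ∈ 𝒴) (M : A) : ExtStarVanish 𝒳 1 M Y := by
  obtain ⟨P, ε, hP, haug⟩ := hbp.2.2.1 M
  intro R ρ hR h hc
  have hext : ∀ t : kernel ρ ⟶ Y, ∃ k : R.X 0 ⟶ Y, kernel.ι ρ ≫ k = t := by
    obtain ⟨s₀, hs₀⟩ := (hR.2.2.2 (P.X 0) (hP.2.1 0 le_rfl)).1 ε
    obtain ⟨r₀, hr₀⟩ := (hP.2.2.2 (R.X 0) (hR.2.1 0 le_rfl)).1 ρ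
    exact ext_transfer s₀ hs₀ r₀ hr₀ (special_ext_Y hbp.1 hadm hP haug hY)
  have hvan := ext_to_van hbp.1 hadm hR hext
  exact hvan h hc

lemma extVanish_of_mem_X {X : A} (hX : X ∈ 𝒳) (N : A) : ExtStarVanish 𝒳 1 X N := by
  intro P ε hP h hc
  obtain ⟨s, hs⟩ := (hP.2.2.2 X hX).1 (𝟙 X)
  have hps : (𝟙 (P.X 0) - ε ≫ s) ≫ ε = 0 := by
    rw [Preadditive.sub_comp, Category.id_comp, Category.assoc, hs, Category.comp_id, sub_self]
  obtain ⟨t, ht⟩ := (hP.2.2.2 (P.X 0) (hP.2.1 0 le_rfl)).2.1 _ hps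
  have hu : (𝟙 (P.X (-1)) - P.d (-1) 0 ≫ t) ≫ P.d (-1) 0 = 0 := by
    rw [Preadditive.sub_comp, Category.id_comp, Category.assoc, ht, Preadditive.comp_sub, Category.comp_id,
      ← Category.assoc, hP.2.2.1, zero_comp, sub_zero, sub_self]
  obtain ⟨H, hH⟩ := (hP.2.2.2 (P.X (-1)) (hP.2.1 (-1) (by norm_num))).2.2 (-1) (by norm_num) _ hu
  have hH' : H ≫ P.d (-2) (-1) = 𝟙 (P.X (-1)) - P.d (-1) 0 ≫ t := hH
  have hc' : P.d (-2) (-1) ≫ h = 0 := hc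
  refine ⟨t ≫ h, ?_⟩
  show P.d (-1) 0 ≫ (t ≫ h) = h
  have : (𝟙 (P.X (-1)) - P.d (-1) 0 ≫ t) ≫ h = 0 := by
    rw [← hH', Category.assoc, hc', comp_zero]
  rw [Preadditive.sub_comp, Category.id_comp, Category.assoc, sub_eq_zero] at this
  exact this.symm

end Helpers2
section Forward

variable {𝒳 𝒴 𝒞 𝒟 : Set A}

lemma EP_to_EI (hbp : IsBalancedPair 𝒳 𝒴) (hadm : XAdmissible 𝒳)
    (hcp : IsRelCotorsionPair 𝒳 𝒞 𝒟)
    (EP : ∀ M : A, ∃ (C D : A) (f : D ⟶ C) (g : C ⟶ M) (w : f ≫ g = 0),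
        C ∈ 𝒞 ∧ D ∈ 𝒟 ∧ SESStarAcyclic 𝒳 𝒴 (ShortComplex.mk f g w))
    (M : A) :
    ∃ (C D : A) (f : M ⟶ D) (g : D ⟶ C) (w : f ≫ g = 0),
        C ∈ 𝒞 ∧ D ∈ 𝒟 ∧ SESStarAcyclic 𝒳 𝒴 (ShortComplex.mk f g w) := by
  obtain ⟨Q, η, hQ, hQaug⟩ := hbp.2.2.2 M
  have hQ0 : Q.X 0 ∈ 𝒴 := hQ.2.1 0 le_rfl
  haveI hηm : Mono η := by
    apply Preadditive.mono_of_cancel_zero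
    intro W t ht
    refine cancel_from_X hbp.1 hadm t ?_
    intro X hX u
    exact (hQaug X hX).1 (u ≫ t) (by rw [Category.assoc, ht, comp_zero])
  set π := cokernel.π η with hπdef
  have hηπ : η ≫ π = 0 := cokernel.condition η
  have hS₀ : (ShortComplex.mk η π hηπ).ShortExact :=
    ShortComplex.ShortExact.mk'
      (ShortComplex.exact_of_g_is_cokernel _ (cokernelIsCokernel η)) hηm inferInstance
  have hηd : η ≫ Q.d 0 1 = 0 := hQ.2.2.1
  set δ := cokernel.desc η (Q.d 0 1) hηd with hδdef
  have hπδ : π ≫ δ = Q.d 0 1 := cokernel.π_desc _ _ _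
  -- every map to Q.X 0 killing d 0 1 factors through η
  have factorη : ∀ {W : A} (w : W ⟶ Q.X 0), w ≫ Q.d 0 1 = 0 → ∃ u : W ⟶ M, u ≫ η = w := by
    intro W w hw
    have hκπ : kernel.ι (Q.d 0 1) ≫ π = 0 := by
      obtain ⟨X, e, he⟩ := hbp.1 (kernel (Q.d 0 1))
      haveI : Epi e := hadm _ _ e he
      obtain ⟨u, hu⟩ := (hQaug X he.1).2.1 (e ≫ kernel.ι (Q.d 0 1)) (by simp)
      rw [← cancel_epi e, comp_zero, ← Category.assoc, ← hu, Category.assoc, hηπ, comp_zero]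
    have hwπ : w ≫ π = 0 := by
      rw [← kernel.lift_ι (Q.d 0 1) w hw, Category.assoc, hκπ, comp_zero]
    obtain ⟨l, hl⟩ := KernelFork.IsLimit.lift' hS₀.fIsKernel w hwπ
    exact ⟨l, hl⟩
  have hδm : Mono δ := by
    apply Preadditive.mono_of_cancel_zero
    intro W t ht
    have hcond : pullback.fst t π ≫ t = pullback.snd t π ≫ π := pullback.condition
    have hsd : pullback.snd t π ≫ Q.d 0 1 = 0 := by
      rw [← hπδ, ← Category.assoc, ← hcond, Category.assoc, ht, comp_zero]
    obtain ⟨u, hu⟩ := factorη _ hsd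
    haveI : Epi (pullback.fst t π) := inferInstance
    rw [← cancel_epi (pullback.fst t π), hcond, ← hu, Category.assoc, hηπ, comp_zero, comp_zero]
  have surjπ : ∀ X, X ∈ 𝒳 → ∀ hL : X ⟶ cokernel η, ∃ k : X ⟶ Q.X 0, k ≫ π = hL := by
    intro X hX hL
    have hδd : δ ≫ Q.d 1 2 = 0 := by
      rw [← cancel_epi π, ← Category.assoc, hπδ, HomologicalComplex.d_comp_d, comp_zero]
    obtain ⟨k, hk⟩ := (hQaug X hX).2.2 1 one_pos (hL ≫ δ)
      (by rw [Category.assoc]; show hL ≫ δ ≫ Q.d 1 2 = 0; rw [hδd, comp_zero])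
    have hk' : k ≫ Q.d 0 1 = hL ≫ δ := hk
    refine ⟨k, ?_⟩
    rw [← cancel_mono δ, Category.assoc, hπδ, hk']
  obtain ⟨C, D', f', g, w', hC, hD', hSE, hRA, hLA⟩ := EP (cokernel η)
  haveI := hSE.mono_f
  haveI := hSE.epi_g
  -- the pullback
  have hcond : pullback.fst g π ≫ g = pullback.snd g π ≫ π := pullback.condition
  set m : M ⟶ pullback g π := pullback.lift 0 η (by rw [zero_comp, hηπ]) with hmdef
  have hmfst : m ≫ pullback.fst g π = 0 := pullback.lift_fst _ _ _
  have hmsnd : m ≫ pullback.snd g π = η := pullback.lift_snd _ _ _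
  haveI hmm : Mono m := mono_of_mono_fac hmsnd
  haveI hfste : Epi (pullback.fst g π) := inferInstance
  -- kernel property of fst
  have kfac : ∀ {W : A} (t : W ⟶ pullback g π), t ≫ pullback.fst g π = 0 →
      ∃ l : W ⟶ M, l ≫ m = t := by
    intro W t ht
    have h2 : (t ≫ pullback.snd g π) ≫ π = 0 := by
      rw [Category.assoc, ← hcond, ← Category.assoc, ht, zero_comp]
    obtain ⟨l, hl⟩ := KernelFork.IsLimit.lift' hS₀.fIsKernel (t ≫ pullback.snd g π) h2
    refine ⟨l, pullback.hom_ext ?_ ?_⟩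
    · rw [Category.assoc, hmfst, comp_zero, ht]
    · rw [Category.assoc, hmsnd]; exact hl
  have klim : IsLimit (KernelFork.ofι m hmfst) := by
    refine KernelFork.IsLimit.ofι' m hmfst (fun {W} k hk => ⟨(kfac k hk).choose, ?_⟩)
    exact (kfac k hk).choose_spec
  have hS₁ : (ShortComplex.mk m (pullback.fst g π) hmfst).ShortExact :=
    ShortComplex.ShortExact.mk' (ShortComplex.exact_of_f_is_kernel _ klim) hmm hfste
  -- the membership T ∈ 𝒟
  have hTD : pullback g π ∈ 𝒟 := by
    rw [hcp.2]
    intro C' hC' P ε hP h hc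
    have hc' : P.d (-2) (-1) ≫ h = 0 := hc
    have hP0X : P.X 0 ∈ 𝒳 := hP.2.1 0 le_rfl
    obtain ⟨k₂, hk₂⟩ := extVanish_into_Y hbp hadm hQ0 C' P ε hP (h ≫ pullback.snd g π)
      (by show P.d (-2) (-1) ≫ (h ≫ pullback.snd g π) = 0
          rw [← Category.assoc, hc', zero_comp])
    have hk₂' : P.d (-1) 0 ≫ k₂ = h ≫ pullback.snd g π := hk₂
    obtain ⟨v, hv⟩ := (hRA (P.X 0) hP0X).2.2 (k₂ ≫ π)
    have hv' : v ≫ g = k₂ ≫ π := hv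
    set kt : P.X 0 ⟶ pullback g π := pullback.lift v k₂ hv' with hktdef
    have hkts : kt ≫ pullback.snd g π = k₂ := pullback.lift_snd _ _ _
    set h' := h - P.d (-1) 0 ≫ kt with h'def
    have h's : h' ≫ pullback.snd g π = 0 := by
      rw [h'def, Preadditive.sub_comp, Category.assoc, hkts, hk₂', sub_self]
    set ι : D' ⟶ pullback g π := pullback.lift f' 0 (by rw [w', zero_comp]) with hιdef
    have hιf : ι ≫ pullback.fst g π = f' := pullback.lift_fst _ _ _
    have hιs : ι ≫ pullback.snd g π = 0 := pullback.lift_snd _ _ _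
    haveI hιm : Mono ι := mono_of_mono_fac hιf
    have kersnd : ∀ {W : A} (t : W ⟶ pullback g π), t ≫ pullback.snd g π = 0 →
        ∃ u : W ⟶ D', u ≫ ι = t := by
      intro W t ht
      have h3 : (t ≫ pullback.fst g π) ≫ g = 0 := by
        rw [Category.assoc, hcond, ← Category.assoc, ht, zero_comp]
      obtain ⟨u, hu⟩ := KernelFork.IsLimit.lift' hSE.fIsKernel (t ≫ pullback.fst g π) h3
      refine ⟨u, pullback.hom_ext ?_ ?_⟩
      · rw [Category.assoc, hιf]; exact hu
      · rw [Category.assoc, hιs, comp_zero, ht]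
    obtain ⟨u, hu⟩ := kersnd h' h's
    have hdu : P.d (-2) (-1) ≫ u = 0 := by
      rw [← cancel_mono ι, Category.assoc, hu, zero_comp, h'def, Preadditive.comp_sub, hc',
        ← Category.assoc, HomologicalComplex.d_comp_d, zero_comp, sub_zero]
    obtain ⟨v', hv'2⟩ := (hcp.2 D').mp hD' C' hC' P ε hP u hdu
    let v'' : P.X 0 ⟶ D' := v'
    have hv'' : P.d (-1) 0 ≫ v'' = u := hv'2
    refine ⟨v'' ≫ ι + kt, ?_⟩
    show P.d (-1) 0 ≫ (v'' ≫ ι + kt) = h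
    rw [Preadditive.comp_add, ← Category.assoc, hv'', hu, h'def]
    abel
  refine ⟨C, pullback g π, m, pullback.fst g π, hmfst, hC, hTD, hS₁, ?_, ?_⟩
  · -- right 𝒳-acyclic
    intro X hX
    refine ⟨fun a b hab => (cancel_mono m).mp hab, fun h hh => kfac h hh, fun u => ?_⟩
    obtain ⟨k, hk⟩ := surjπ X hX (u ≫ g)
    exact ⟨pullback.lift u k hk.symm, pullback.lift_fst _ _ _⟩
  · -- left 𝒴-acyclic
    intro Y hY
    refine ⟨fun a b hab => (cancel_epi (pullback.fst g π)).mp hab, fun h hh => ?_, fun h => ?_⟩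
    · obtain ⟨l, hl⟩ := Cofork.IsColimit.desc' hS₁.gIsCokernel h (by rw [zero_comp]; exact hh)
      exact ⟨l, hl⟩
    · obtain ⟨k₀, hk₀⟩ := (hQ.2.2.2 Y hY).1 h
      refine ⟨pullback.snd g π ≫ k₀, ?_⟩
      show m ≫ (pullback.snd g π ≫ k₀) = h
      rw [← Category.assoc, hmsnd, hk₀]

end Forward
section Backward

variable {𝒳 𝒴 𝒞 𝒟 : Set A}

lemma EI_to_EP (hbp : IsBalancedPair 𝒳 𝒴) (hadm : XAdmissible 𝒳)
    (hcp : IsRelCotorsionPair 𝒳 𝒞 𝒟)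
    (EI : ∀ M : A, ∃ (C D : A) (f : M ⟶ D) (g : D ⟶ C) (w : f ≫ g = 0),
        C ∈ 𝒞 ∧ D ∈ 𝒟 ∧ SESStarAcyclic 𝒳 𝒴 (ShortComplex.mk f g w))
    (M : A) :
    ∃ (C D : A) (f : D ⟶ C) (g : C ⟶ M) (w : f ≫ g = 0),
        C ∈ 𝒞 ∧ D ∈ 𝒟 ∧ SESStarAcyclic 𝒳 𝒴 (ShortComplex.mk f g w) := by
  obtain ⟨P, ε, hP, hPaug⟩ := hbp.2.2.1 M
  have hP0 : P.X 0 ∈ 𝒳 := hP.2.1 0 le_rfl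
  haveI hεe : Epi ε := hadm _ _ ε ⟨hP0, fun X' hX' g' => (hP.2.2.2 X' hX').1 g'⟩
  have hιε : kernel.ι ε ≫ ε = 0 := kernel.condition ε
  have hSK : (ShortComplex.mk (kernel.ι ε) ε hιε).ShortExact :=
    ShortComplex.ShortExact.mk'
      (ShortComplex.exact_of_f_is_kernel _ (kernelIsKernel ε)) inferInstance hεe
  obtain ⟨C', D', f, g, w', hC', hD', hSE, hRA, hLA⟩ := EI (kernel ε)
  haveI := hSE.mono_f
  haveI := hSE.epi_g
  have hpcond : kernel.ι ε ≫ pushout.inl (kernel.ι ε) f = f ≫ pushout.inr (kernel.ι ε) f :=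
    pushout.condition
  set q : pushout (kernel.ι ε) f ⟶ M := pushout.desc ε 0 (by rw [hιε, comp_zero]) with hqdef
  have hlq : pushout.inl (kernel.ι ε) f ≫ q = ε := pushout.inl_desc _ _ _
  have hrq : pushout.inr (kernel.ι ε) f ≫ q = 0 := pushout.inr_desc _ _ _
  haveI hqe : Epi q := epi_of_epi_fac hlq
  haveI hinrm : Mono (pushout.inr (kernel.ι ε) f) := inferInstance
  have cofacq : ∀ {W : A} (t : pushout (kernel.ι ε) f ⟶ W),
      pushout.inr (kernel.ι ε) f ≫ t = 0 → ∃ l : M ⟶ W, q ≫ l = t := by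
    intro W t ht
    have h2 : kernel.ι ε ≫ (pushout.inl (kernel.ι ε) f ≫ t) = 0 := by
      rw [← Category.assoc, hpcond, Category.assoc, ht, comp_zero]
    obtain ⟨l, hl⟩ := Cofork.IsColimit.desc' hSK.gIsCokernel
      (pushout.inl (kernel.ι ε) f ≫ t) (by rw [zero_comp]; exact h2)
    refine ⟨l, pushout.hom_ext ?_ ?_⟩
    · rw [← Category.assoc, hlq]; exact hl
    · rw [← Category.assoc, hrq, zero_comp, ht]
  have qlim : IsColimit (CokernelCofork.ofπ q hrq) := by
    refine CokernelCofork.IsColimit.ofπ' q hrq (fun {W} k hk => ?_)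
    exact ⟨(cofacq k hk).choose, (cofacq k hk).choose_spec⟩
  have hS₁ : (ShortComplex.mk (pushout.inr (kernel.ι ε) f) q hrq).ShortExact :=
    ShortComplex.ShortExact.mk'
      (ShortComplex.exact_of_g_is_cokernel _ qlim) hinrm hqe
  set r : pushout (kernel.ι ε) f ⟶ C' := pushout.desc 0 g (by rw [comp_zero, w']) with hrdef
  have hlr : pushout.inl (kernel.ι ε) f ≫ r = 0 := pushout.inl_desc _ _ _
  have hrr : pushout.inr (kernel.ι ε) f ≫ r = g := pushout.inr_desc _ _ _
  haveI hre : Epi r := epi_of_epi_fac hrr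
  haveI hinlm : Mono (pushout.inl (kernel.ι ε) f) := inferInstance
  have cofacr : ∀ {W : A} (t : pushout (kernel.ι ε) f ⟶ W),
      pushout.inl (kernel.ι ε) f ≫ t = 0 → ∃ l : C' ⟶ W, r ≫ l = t := by
    intro W t ht
    have h2 : f ≫ (pushout.inr (kernel.ι ε) f ≫ t) = 0 := by
      rw [← Category.assoc, ← hpcond, Category.assoc, ht, comp_zero]
    obtain ⟨l, hl⟩ := Cofork.IsColimit.desc' hSE.gIsCokernel
      (pushout.inr (kernel.ι ε) f ≫ t) (by rw [zero_comp]; exact h2)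
    refine ⟨l, pushout.hom_ext ?_ ?_⟩
    · rw [← Category.assoc, hlr, zero_comp, ht]
    · rw [← Category.assoc, hrr]; exact hl
  have rlim : IsColimit (CokernelCofork.ofπ r hlr) := by
    refine CokernelCofork.IsColimit.ofπ' r hlr (fun {W} k hk => ?_)
    exact ⟨(cofacr k hk).choose, (cofacr k hk).choose_spec⟩
  have hS₂ : (ShortComplex.mk (pushout.inl (kernel.ι ε) f) r hlr).ShortExact :=
    ShortComplex.ShortExact.mk'
      (ShortComplex.exact_of_g_is_cokernel _ rlim) hinlm hre
  -- pushout ∈ 𝒞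
  have hTC : pushout (kernel.ι ε) f ∈ 𝒞 := by
    rw [hcp.1]
    intro D hD R ρ hR h hc
    have hext : ∀ t : kernel ρ ⟶ D, ∃ k : R.X 0 ⟶ D, kernel.ι ρ ≫ k = t := by
      intro t
      have liftρ' : ∀ X, X ∈ 𝒳 → ∀ u : X ⟶ C', ∃ z : X ⟶ R.X 0, z ≫ (ρ ≫ r) = u := by
        intro X hX u
        obtain ⟨v, hv⟩ := (hRA X hX).2.2 u
        have hv' : v ≫ g = u := hv
        obtain ⟨z, hz⟩ := (hR.2.2.2 X hX).1 (v ≫ pushout.inr (kernel.ι ε) f)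
        refine ⟨z, ?_⟩
        rw [← Category.assoc, hz, Category.assoc, hrr, hv']
      obtain ⟨PB, εB, hPB, hPBaug⟩ := hbp.2.2.1 C'
      have vanB := (hcp.2 D).mp hD C' hC' PB εB hPB
      have extB := van_to_ext hbp.1 hadm hPB (fun hh hcc => vanB hh hcc)
      obtain ⟨r₀, hr₀⟩ := (hPB.2.2.2 (R.X 0) (hR.2.1 0 le_rfl)).1 (ρ ≫ r)
      obtain ⟨s₀, hs₀⟩ := liftρ' (PB.X 0) (hPB.2.1 0 le_rfl) εB
      have extK' := ext_transfer s₀ hs₀ r₀ hr₀ extB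
      -- splitting chase
      have hφ0 : (kernel.ι (ρ ≫ r) ≫ ρ) ≫ r = 0 := by
        rw [Category.assoc]; exact kernel.condition (ρ ≫ r)
      obtain ⟨φ, hφ⟩ := KernelFork.IsLimit.lift' hS₂.fIsKernel (kernel.ι (ρ ≫ r) ≫ ρ) hφ0
      let φc : kernel (ρ ≫ r) ⟶ P.X 0 := φ
      have hφ' : φc ≫ pushout.inl (kernel.ι ε) f = kernel.ι (ρ ≫ r) ≫ ρ := hφ
      obtain ⟨s, hsl⟩ := (hR.2.2.2 (P.X 0) hP0).1 (pushout.inl (kernel.ι ε) f)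
      have hsρ' : s ≫ (ρ ≫ r) = 0 := by rw [← Category.assoc, hsl, hlr]
      have hvι : kernel.lift (ρ ≫ r) s hsρ' ≫ kernel.ι (ρ ≫ r) = s := kernel.lift_ι _ _ _
      set v := kernel.lift (ρ ≫ r) s hsρ' with hvdef
      have hvφ : v ≫ φc = 𝟙 (P.X 0) := by
        rw [← cancel_mono (pushout.inl (kernel.ι ε) f), Category.assoc, hφ', ← Category.assoc,
          hvι, hsl, Category.id_comp]
      have hlam0 : kernel.ι ρ ≫ (ρ ≫ r) = 0 := by
        rw [← Category.assoc, kernel.condition, zero_comp]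
      have hlam : kernel.lift (ρ ≫ r) (kernel.ι ρ) hlam0 ≫ kernel.ι (ρ ≫ r) = kernel.ι ρ :=
        kernel.lift_ι _ _ _
      set lam := kernel.lift (ρ ≫ r) (kernel.ι ρ) hlam0 with hlamdef
      haveI hlamm : Mono lam := mono_of_mono_fac hlam
      have hlamφ : lam ≫ φc = 0 := by
        rw [← cancel_mono (pushout.inl (kernel.ι ε) f), Category.assoc, hφ', ← Category.assoc,
          hlam, kernel.condition, zero_comp]
      have he0 : (𝟙 (kernel (ρ ≫ r)) - φc ≫ v) ≫ φc = 0 := by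
        rw [Preadditive.sub_comp, Category.id_comp, Category.assoc, hvφ, Category.comp_id,
          sub_self]
      have kerφ : ∀ {W : A} (t' : W ⟶ kernel (ρ ≫ r)), t' ≫ φc = 0 →
          ∃ cc : W ⟶ kernel ρ, cc ≫ lam = t' := by
        intro W t' ht'
        have h3 : (t' ≫ kernel.ι (ρ ≫ r)) ≫ ρ = 0 := by
          rw [Category.assoc, ← hφ', ← Category.assoc, ht', zero_comp]
        refine ⟨kernel.lift ρ (t' ≫ kernel.ι (ρ ≫ r)) h3, ?_⟩
        rw [← cancel_mono (kernel.ι (ρ ≫ r)), Category.assoc, hlam, kernel.lift_ι]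
      obtain ⟨c, hclam⟩ := kerφ (𝟙 (kernel (ρ ≫ r)) - φc ≫ v) he0
      have hlamc : lam ≫ c = 𝟙 (kernel ρ) := by
        rw [← cancel_mono lam, Category.assoc, hclam, Preadditive.comp_sub, Category.comp_id,
          ← Category.assoc, hlamφ, zero_comp, sub_zero, Category.id_comp]
      obtain ⟨k', hk'⟩ := extK' (c ≫ t)
      refine ⟨k', ?_⟩
      rw [← hlam, Category.assoc, hk', ← Category.assoc, hlamc, Category.id_comp]
    exact ext_to_van hbp.1 hadm hR hext h hc
  refine ⟨pushout (kernel.ι ε) f, D', pushout.inr (kernel.ι ε) f, q, hrq, hTC, hD', hS₁, ?_, ?_⟩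
  · -- right 𝒳-acyclic
    intro X hX
    refine ⟨fun a b hab => (cancel_mono (pushout.inr (kernel.ι ε) f)).mp hab,
      fun h hh => ?_, fun u => ?_⟩
    · obtain ⟨l, hl⟩ := KernelFork.IsLimit.lift' hS₁.fIsKernel h hh
      exact ⟨l, hl⟩
    · obtain ⟨vv, hvv⟩ := (hP.2.2.2 X hX).1 u
      refine ⟨vv ≫ pushout.inl (kernel.ι ε) f, ?_⟩
      show (vv ≫ pushout.inl (kernel.ι ε) f) ≫ q = u
      rw [Category.assoc, hlq, hvv]
  · -- left 𝒴-acyclic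
    intro Y hY
    refine ⟨fun a b hab => (cancel_epi q).mp hab, fun h hh => ?_, fun h => ?_⟩
    · obtain ⟨l, hl⟩ := Cofork.IsColimit.desc' hS₁.gIsCokernel h (by rw [zero_comp]; exact hh)
      exact ⟨l, hl⟩
    · obtain ⟨k₁, hk₁⟩ := special_ext_Y hbp.1 hadm hP hPaug hY (f ≫ h)
      refine ⟨pushout.desc k₁ h hk₁, ?_⟩
      show pushout.inr (kernel.ι ε) f ≫ pushout.desc k₁ h hk₁ = h
      exact pushout.inr_desc _ _ _

end Backward

theorem stmt9 (𝒳 𝒴 𝒞 𝒟 : Set A) (hbp : IsBalancedPair 𝒳 𝒴) (hadm : XAdmissible 𝒳)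
    (hcp : IsRelCotorsionPair 𝒳 𝒞 𝒟) :
    (∀ M : A, ∃ (C D : A) (f : D ⟶ C) (g : C ⟶ M) (w : f ≫ g = 0),
        C ∈ 𝒞 ∧ D ∈ 𝒟 ∧ SESStarAcyclic 𝒳 𝒴 (ShortComplex.mk f g w)) ↔
    (∀ M : A, ∃ (C D : A) (f : M ⟶ D) (g : D ⟶ C) (w : f ≫ g = 0),
        C ∈ 𝒞 ∧ D ∈ 𝒟 ∧ SESStarAcyclic 𝒳 𝒴 (ShortComplex.mk f g w)) := by
  constructor
  · intro EP M
    exact EP_to_EI hbp hadm hcp EP M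
  · intro EI M
    exact EI_to_EP hbp hadm hcp EI M
end

section
/- Let (𝒳, 𝒴) be an admissible balanced pair in an abelian category 𝒜 and ℰ a subcategory closed under ⁎-extensions. If φ : E → M is a minimal right ℰ-approximation, then the kernel K of φ satisfies Ext⁎¹(E', K) = 0 for every E' ∈ ℰ (relative Wakamatsu lemma). -/
open CategoryTheory Limits

universe v u

variable {A : Type u} [Category.{v} A] [Abelian A]

/-- closed under `⁎`-extensions -/
def ClosedUnderStarExt (𝒳 𝒴 ℰ : Set A) : Prop :=
  ∀ S : ShortComplex A, SESStarAcyclic 𝒳 𝒴 S → S.X₁ ∈ ℰ → S.X₃ ∈ ℰ → S.X₂ ∈ ℰ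


/-- The pushout of a mono `g` along `f`, with cokernel leg `c`, gives a
short exact sequence `0 → B → pushout f g → Q → 0`. -/
lemma pushoutSES {K B Z Q : A} (f : K ⟶ B) (g : K ⟶ Z) [Mono g] (c : Z ⟶ Q)
    (w : g ≫ c = 0) (hc : IsColimit (CokernelCofork.ofπ c w)) :
    (ShortComplex.mk (pushout.inl f g)
      (pushout.desc (0 : B ⟶ Q) c (by rw [comp_zero, w]))
      (pushout.inl_desc _ _ _)).ShortExact := by
  set π : pushout f g ⟶ Q := pushout.desc (0 : B ⟶ Q) c (by rw [comp_zero, w]) with hπdef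
  have hinrπ : pushout.inr f g ≫ π = c := pushout.inr_desc _ _ _
  have hinlπ : pushout.inl f g ≫ π = 0 := pushout.inl_desc _ _ _
  have hcepi : Epi c := epi_of_isColimit_cofork hc
  have hepi : Epi π := epi_of_epi_fac hinrπ
  refine { exact := ?_, mono_f := inferInstance, epi_g := hepi }
  rw [ShortComplex.exact_iff_exact_up_to_refinements]
  intro T x hx
  set δ : B ⊞ Z ⟶ pushout f g := biprod.desc (pushout.inl f g) (pushout.inr f g) with hδdef
  have hδepi : Epi δ := ⟨fun {W} u v huv => by
    apply pushout.hom_ext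
    · simpa [hδdef] using biprod.inl ≫= huv
    · simpa [hδdef] using biprod.inr ≫= huv⟩
  haveI := hδepi
  obtain ⟨T1, p1, hp1, y, hy⟩ := surjective_up_to_refinements_of_epi δ x
  haveI := hp1
  have hysplit : y ≫ δ =
      (y ≫ biprod.fst) ≫ pushout.inl f g + (y ≫ biprod.snd) ≫ pushout.inr f g := by
    rw [hδdef, biprod.desc_eq]
    simp only [Preadditive.comp_add, ← Category.assoc]
  have h1 : (y ≫ biprod.snd) ≫ c = 0 := by
    have e1 : (y ≫ δ) ≫ π = 0 := by
      rw [← hy, Category.assoc]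
      change p1 ≫ x ≫ π = 0
      rw [hx, comp_zero]
    rw [hysplit] at e1
    simpa [Preadditive.add_comp, Category.assoc, hinlπ, hinrπ] using e1
  have hgc : (ShortComplex.mk g c w).Exact := ShortComplex.exact_of_g_is_cokernel _ hc
  rw [ShortComplex.exact_iff_exact_up_to_refinements] at hgc
  obtain ⟨T2, p2, hp2, z, hz⟩ := hgc (y ≫ biprod.snd) h1
  haveI := hp2
  refine ⟨T2, p2 ≫ p1, epi_comp _ _, p2 ≫ (y ≫ biprod.fst) + z ≫ f, ?_⟩
  calc (p2 ≫ p1) ≫ x = p2 ≫ y ≫ δ := by rw [Category.assoc, hy]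
    _ = p2 ≫ ((y ≫ biprod.fst) ≫ pushout.inl f g)
        + p2 ≫ ((y ≫ biprod.snd) ≫ pushout.inr f g) := by rw [hysplit, Preadditive.comp_add]
    _ = (p2 ≫ (y ≫ biprod.fst)) ≫ pushout.inl f g
        + (p2 ≫ (y ≫ biprod.snd)) ≫ pushout.inr f g := by
          simp only [Category.assoc]
    _ = (p2 ≫ (y ≫ biprod.fst)) ≫ pushout.inl f g
        + (z ≫ g) ≫ pushout.inr f g := by rw [hz]
    _ = (p2 ≫ (y ≫ biprod.fst)) ≫ pushout.inl f g
        + (z ≫ f) ≫ pushout.inl f g := by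
          have : (z ≫ g) ≫ pushout.inr f g = (z ≫ f) ≫ pushout.inl f g := by
            rw [Category.assoc, Category.assoc, ← pushout.condition]
          rw [this]
    _ = (p2 ≫ (y ≫ biprod.fst) + z ≫ f) ≫ pushout.inl f g := by rw [Preadditive.add_comp]

/-- A complex with liftings against right approximations is exact. -/
lemma exact_of_approx_lift {𝒳 : Set A}
    (happ : ∀ M : A, ∃ (X : A) (f : X ⟶ M), IsRightApprox 𝒳 f) (hadm : XAdmissible 𝒳)
    {X₁ X₂ X₃ : A} (f : X₁ ⟶ X₂) (g : X₂ ⟶ X₃) (w : f ≫ g = 0)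
    (hlift : ∀ X ∈ 𝒳, ∀ h : X ⟶ X₂, h ≫ g = 0 → ∃ k : X ⟶ X₁, k ≫ f = h) :
    (ShortComplex.mk f g w).Exact := by
  rw [ShortComplex.exact_iff_exact_up_to_refinements]
  intro T x hx
  obtain ⟨X, ρ, hρ⟩ := happ T
  haveI : Epi ρ := hadm _ _ ρ hρ
  obtain ⟨k, hk⟩ := hlift X hρ.1 (ρ ≫ x) (by rw [Category.assoc, hx, comp_zero])
  exact ⟨X, ρ, inferInstance, k, hk.symm⟩

/-- Lifting at degree `-1` in a proper `𝒳`-resolution. -/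
lemma res_lift_neg_one {𝒳 : Set A} {E' : A} {P : CochainComplex A ℤ} {ε : P.X 0 ⟶ E'}
    (hP : IsProperXResolution 𝒳 E' P ε) {X : A} (hX : X ∈ 𝒳)
    (f : X ⟶ P.X (-1)) (hf : f ≫ P.d (-1) 0 = 0) :
    ∃ k : X ⟶ P.X (-2), k ≫ P.d (-2) (-1) = f := by
  obtain ⟨k, hk⟩ := (hP.2.2.2 X hX).2.2 (-1) (by norm_num) f hf
  exact ⟨k, hk⟩

/-- The core of the relative Wakamatsu lemma, for a resolution whose augmented
complex is also left `𝒴`-acyclic. -/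
lemma wakamatsu_core (𝒳 𝒴 ℰ : Set A) (hbp : IsBalancedPair 𝒳 𝒴) (hadm : XAdmissible 𝒳)
    (hext : ClosedUnderStarExt 𝒳 𝒴 ℰ) {E M : A} (φ : E ⟶ M)
    (hmin : IsMinimalRightApprox ℰ φ) {E' : A} (hE' : E' ∈ ℰ)
    (P : CochainComplex A ℤ) (ε : P.X 0 ⟶ E') (hP : IsProperXResolution 𝒳 E' P ε)
    (hPa : AugResLeftAcyclic 𝒴 E' P ε)
    (h : P.X (-1) ⟶ kernel φ) (hh : P.d (-2) (-1) ≫ h = 0) :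
    ∃ k : P.X 0 ⟶ kernel φ, P.d (-1) 0 ≫ k = h := by
  have hdε : P.d (-1) 0 ≫ ε = 0 := hP.2.2.1
  -- ε is an epimorphism
  have hε : Epi ε := by
    obtain ⟨X, ρ, hρ⟩ := hbp.1 E'
    haveI : Epi ρ := hadm _ _ ρ hρ
    obtain ⟨k, hk⟩ := (hP.2.2.2 X hρ.1).1 ρ
    exact epi_of_epi_fac hk
  -- the two relevant exact complexes
  have hS0 : (ShortComplex.mk (P.d (-1) 0) ε hdε).Exact :=
    exact_of_approx_lift hbp.1 hadm _ _ _ (fun X hX => (hP.2.2.2 X hX).2.1)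
  have hS1 : (ShortComplex.mk (P.d (-2) (-1)) (P.d (-1) 0) (P.d_comp_d _ _ _)).Exact :=
    exact_of_approx_lift hbp.1 hadm _ _ _ (fun X hX f hf => res_lift_neg_one hP hX f hf)
  set S1 := ShortComplex.mk (P.d (-2) (-1)) (P.d (-1) 0) (P.d_comp_d _ _ _) with hS1def
  set C := S1.opcycles with hCdef
  set e : P.X (-1) ⟶ C := S1.pOpcycles with hedef
  set m : C ⟶ P.X 0 := S1.fromOpcycles with hmdef
  haveI hm : Mono m := hS1.mono_fromOpcycles
  have hem : e ≫ m = P.d (-1) 0 := S1.p_fromOpcycles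
  haveI he : Epi e := by rw [hedef]; infer_instance
  set h' : C ⟶ kernel φ := S1.descOpcycles h hh with hh'def
  have heh : e ≫ h' = h := S1.p_descOpcycles _ _
  have hmε : m ≫ ε = 0 := by
    rw [← cancel_epi e, ← Category.assoc, hem, hdε, comp_zero]
  have hd2e : P.d (-2) (-1) ≫ e = 0 := by
    rw [← cancel_mono m, Category.assoc, hem, zero_comp]
    exact P.d_comp_d _ _ _
  -- ε is a cokernel of m
  haveI : Epi (ShortComplex.mk (P.d (-1) 0) ε hdε).g := hε
  have hεcoker0 := hS0.gIsCokernel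
  have hεcoker : IsColimit (CokernelCofork.ofπ ε hmε) := by
    haveI := hε
    exact CokernelCofork.IsColimit.ofπ' ε hmε (fun {Z} k hk =>
      CokernelCofork.IsColimit.desc' hεcoker0 k
        (by show P.d (-1) 0 ≫ k = 0; rw [← hem, Category.assoc, hk, comp_zero]))
  -- the pushout G of m along h'
  set G := pushout h' m with hGdef
  set α : kernel φ ⟶ G := pushout.inl h' m with hαdef
  set q : P.X 0 ⟶ G := pushout.inr h' m with hqdef
  set π : G ⟶ E' := pushout.desc (0 : kernel φ ⟶ E') ε (by rw [comp_zero, hmε]) with hπdef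
  have hξ : (ShortComplex.mk α π (pushout.inl_desc _ _ _)).ShortExact :=
    pushoutSES h' m ε hmε hεcoker
  have hαπ : α ≫ π = 0 := pushout.inl_desc _ _ _
  have hqπ : q ≫ π = ε := pushout.inr_desc _ _ _
  haveI hαmono : Mono α := hξ.mono_f
  haveI := hξ.epi_g
  have hπcoker := hξ.exact.gIsCokernel
  have hcondG : h' ≫ α = m ≫ q := by rw [hαdef, hqdef]; exact pushout.condition
  -- the pushout H of α along the kernel inclusion
  set ι : kernel φ ⟶ E := kernel.ι φ with hιdef
  set H := pushout ι α with hHdef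
  set j : E ⟶ H := pushout.inl ι α with hjdef
  set p : G ⟶ H := pushout.inr ι α with hpdef
  set π' : H ⟶ E' := pushout.desc (0 : E ⟶ E') π (by rw [comp_zero, hαπ]) with hπ'def
  have hSE : (ShortComplex.mk j π' (pushout.inl_desc _ _ _)).ShortExact :=
    pushoutSES ι α π hαπ hπcoker
  have hjπ' : j ≫ π' = 0 := pushout.inl_desc _ _ _
  have hpπ' : p ≫ π' = π := pushout.inr_desc _ _ _
  have hcondH : ι ≫ j = α ≫ p := by rw [hjdef, hpdef]; exact pushout.condition
  set ψ : H ⟶ M := pushout.desc φ (0 : G ⟶ M)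
    (by rw [comp_zero, hιdef]; exact kernel.condition φ) with hψdef
  have hjψ : j ≫ ψ = φ := pushout.inl_desc _ _ _
  have hpψ : p ≫ ψ = 0 := pushout.inr_desc _ _ _
  -- the bottom row is ⁎-acyclic
  have hstar : SESStarAcyclic 𝒳 𝒴 (ShortComplex.mk j π' (pushout.inl_desc _ _ _)) := by
    refine ⟨hSE, ?_, ?_⟩
    · intro X hX
      refine ⟨?_, ?_, ?_⟩
      · intro a b hab
        haveI := hSE.mono_f
        exact (cancel_mono j).1 hab
      · intro x hx
        haveI := hSE.mono_f
        obtain ⟨l, hl⟩ := KernelFork.IsLimit.lift' hSE.exact.fIsKernel x hx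
        exact ⟨l, hl⟩
      · intro g0
        obtain ⟨k, hk⟩ := (hP.2.2.2 X hX).1 g0
        refine ⟨k ≫ q ≫ p, ?_⟩
        show (k ≫ q ≫ p) ≫ π' = g0
        simp only [Category.assoc]
        rw [hpπ', hqπ, hk]
    · intro Y hY
      refine ⟨?_, ?_, ?_⟩
      · intro a b hab
        haveI := hSE.epi_g
        exact (cancel_epi π').1 hab
      · intro x hx
        haveI := hSE.epi_g
        obtain ⟨l, hl⟩ := CokernelCofork.IsColimit.desc' hSE.exact.gIsCokernel x hx
        exact ⟨l, hl⟩
      · intro gE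
        have hcond : P.d (-2) (-1) ≫ (e ≫ h' ≫ (ι ≫ gE)) = 0 := by
          rw [← Category.assoc, hd2e, zero_comp]
        obtain ⟨w0, hw0⟩ := (hPa Y hY).2.2 (-1) (by norm_num) (e ≫ h' ≫ (ι ≫ gE)) hcond
        have hw0' : P.d (-1) 0 ≫ w0 = e ≫ h' ≫ (ι ≫ gE) := hw0
        have hmw : m ≫ w0 = h' ≫ (ι ≫ gE) := by
          rw [← cancel_epi e, ← Category.assoc, hem, hw0']
        set uG : G ⟶ Y := pushout.desc (ι ≫ gE) w0 hmw.symm with huGdef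
        have hαuG : α ≫ uG = ι ≫ gE := by rw [hαdef, huGdef]; exact pushout.inl_desc _ _ _
        set u : H ⟶ Y := pushout.desc gE uG (by rw [hαuG]) with hudef
        refine ⟨u, ?_⟩
        show j ≫ u = gE
        rw [hjdef, hudef]
        exact pushout.inl_desc _ _ _
  have hH : H ∈ ℰ := hext _ hstar hmin.1.1 hE'
  -- minimality argument
  obtain ⟨θ, hθ⟩ := hmin.1.2 H hH ψ
  have hs : (j ≫ θ) ≫ φ = φ := by rw [Category.assoc, hθ, hjψ]
  haveI hiso : IsIso (j ≫ θ) := hmin.2 _ hs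
  set r : H ⟶ E := θ ≫ inv (j ≫ θ) with hrdef
  have hjr : j ≫ r = 𝟙 E := by rw [hrdef, ← Category.assoc, IsIso.hom_inv_id]
  have hinv : inv (j ≫ θ) ≫ φ = φ := by rw [IsIso.inv_comp_eq]; exact hs.symm
  have hrφ : r ≫ φ = ψ := by rw [hrdef, Category.assoc, hinv, hθ]
  have hγφ : (p ≫ r) ≫ φ = 0 := by rw [Category.assoc, hrφ, hpψ]
  set t : G ⟶ kernel φ := kernel.lift φ (p ≫ r) hγφ with htdef
  have htι : t ≫ ι = p ≫ r := by rw [htdef, hιdef]; exact kernel.lift_ι _ _ _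
  have hαt : α ≫ t = 𝟙 (kernel φ) := by
    haveI : Mono ι := by rw [hιdef]; infer_instance
    rw [← cancel_mono ι, Category.assoc, htι, Category.id_comp, ← Category.assoc,
      ← hcondH, Category.assoc, hjr, Category.comp_id]
  refine ⟨q ≫ t, ?_⟩
  calc P.d (-1) 0 ≫ q ≫ t = (e ≫ m) ≫ q ≫ t := by rw [hem]
    _ = e ≫ (m ≫ q) ≫ t := by simp only [Category.assoc]
    _ = e ≫ (h' ≫ α) ≫ t := by rw [hcondG]
    _ = e ≫ h' ≫ α ≫ t := by simp only [Category.assoc]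
    _ = e ≫ h' := by rw [hαt, Category.comp_id]
    _ = h := heh

theorem stmt10 (𝒳 𝒴 ℰ : Set A) (hbp : IsBalancedPair 𝒳 𝒴) (hadm : XAdmissible 𝒳)
    (hext : ClosedUnderStarExt 𝒳 𝒴 ℰ) {E M : A} (φ : E ⟶ M)
    (hmin : IsMinimalRightApprox ℰ φ) :
    ∀ E' ∈ ℰ, ExtStarVanish 𝒳 1 E' (kernel φ) := by
  intro E' hE' P ε hP
  show ∀ h : P.X (-1) ⟶ kernel φ, P.d (-2) (-1) ≫ h = 0 →
    ∃ k : P.X 0 ⟶ kernel φ, P.d (-1) 0 ≫ k = h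
  intro h hh
  -- a left 𝒴-acyclic proper resolution from the balanced pair
  obtain ⟨P', ε', hP', hPa'⟩ := hbp.2.2.1 E'
  -- comparison chain maps in low degrees
  obtain ⟨u₀, hu₀⟩ := (hP.2.2.2 (P'.X 0) (hP'.2.1 0 le_rfl)).1 ε'
  obtain ⟨u₁, hu₁⟩ := (hP.2.2.2 (P'.X (-1)) (hP'.2.1 (-1) (by norm_num))).2.1
    (P'.d (-1) 0 ≫ u₀) (by rw [Category.assoc, hu₀]; exact hP'.2.2.1)
  obtain ⟨u₂, hu₂⟩ := res_lift_neg_one hP (hP'.2.1 (-2) (by norm_num))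
    (P'.d (-2) (-1) ≫ u₁)
    (by rw [Category.assoc, hu₁, ← Category.assoc, HomologicalComplex.d_comp_d, zero_comp])
  obtain ⟨v₀, hv₀⟩ := (hP'.2.2.2 (P.X 0) (hP.2.1 0 le_rfl)).1 ε
  obtain ⟨v₁, hv₁⟩ := (hP'.2.2.2 (P.X (-1)) (hP.2.1 (-1) (by norm_num))).2.1
    (P.d (-1) 0 ≫ v₀) (by rw [Category.assoc, hv₀]; exact hP.2.2.1)
  -- homotopy between v ∘ u and the identity
  obtain ⟨s₀, hs₀⟩ := (hP.2.2.2 (P.X 0) (hP.2.1 0 le_rfl)).2.1 (v₀ ≫ u₀ - 𝟙 (P.X 0))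
    (by rw [Preadditive.sub_comp, Category.assoc, hu₀, hv₀, Category.id_comp, sub_self])
  obtain ⟨s₁, hs₁⟩ := res_lift_neg_one hP (hP.2.1 (-1) (by norm_num))
    (v₁ ≫ u₁ - 𝟙 (P.X (-1)) - P.d (-1) 0 ≫ s₀)
    (by
      simp only [Preadditive.sub_comp, Category.assoc, Category.id_comp]
      rw [hu₁, hs₀]
      rw [show v₁ ≫ P'.d (-1) 0 ≫ u₀ = (P.d (-1) 0 ≫ v₀) ≫ u₀ by
        rw [← Category.assoc, hv₁]]
      simp only [Preadditive.comp_sub, Category.comp_id, Category.assoc]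
      abel)
  -- push the cocycle to the good resolution and solve there
  have hcocycle : P'.d (-2) (-1) ≫ (u₁ ≫ h) = 0 := by
    rw [← Category.assoc, ← hu₂, Category.assoc, hh, comp_zero]
  obtain ⟨k', hk'⟩ := wakamatsu_core 𝒳 𝒴 ℰ hbp hadm hext φ hmin hE' P' ε' hP' hPa'
    (u₁ ≫ h) hcocycle
  refine ⟨v₀ ≫ k' - s₀ ≫ h, ?_⟩
  have hvu : v₁ ≫ u₁ = 𝟙 (P.X (-1)) + s₁ ≫ P.d (-2) (-1) + P.d (-1) 0 ≫ s₀ := by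
    rw [hs₁]; abel
  rw [Preadditive.comp_sub, ← Category.assoc, ← Category.assoc, ← hv₁, Category.assoc, hk',
    ← Category.assoc, hvu]
  simp only [Preadditive.add_comp, Category.id_comp, Category.assoc, hh, comp_zero, add_zero]
  abel
end
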